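/- arXiv:2405.03861 — 10 statements merged into one kernel-verified Lean document; each statement's English description precedes it below -/
import Mathlib

section
/- Let F : ℝⁿ × ℝᴺ → ℝⁿ be continuously differentiable, let X : Ω → ℝⁿ be an equilibrium branch on an open set Ω ⊆ ℝᴺ with invertible Jacobian J(I) for every I ∈ Ω, let φ : ℝⁿ → ℝ be continuously differentiable, and let z = φ ∘ X be the associated input-output function. Then for every M ∈ {1,…,N} and I ∈ Ω, ∂z/∂I_M(I) = −(1/det J(I)) · ⟨∇φ(X(I)), adj(J(I)) · F_{I_M}(X(I), I)⟩. Consequently, I₀ ∈ Ω is a point of infinitesimal homeostasis (∇z(I₀) = 0) if and only if ⟨∇φ(X(I₀)), adj(J(I₀)) · F_{I_M}(X(I₀), I₀)⟩ = 0 for all M = 1,…,N. -/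
open Matrix

/-- Derivative formula for the input-output function `z = φ ∘ X` of a
`C¹` equilibrium branch with invertible Jacobian, and the resulting characterization of
infinitesimal homeostasis points. -/
theorem stmt_1 (n N : ℕ)
    (F : (Fin n → ℝ) × (Fin N → ℝ) → (Fin n → ℝ))
    (hF : ContDiff ℝ 1 F)
    (Ω : Set (Fin N → ℝ)) (hΩ : IsOpen Ω)
    (X : (Fin N → ℝ) → (Fin n → ℝ))
    (hX : ContDiffOn ℝ 1 X Ω)
    (heq : ∀ I ∈ Ω, F (X I, I) = 0)
    (J : (Fin N → ℝ) → Matrix (Fin n) (Fin n) ℝ)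
    (hJ : ∀ I i j, J I i j = fderiv ℝ F (X I, I) (Pi.single j 1, 0) i)
    (hJinv : ∀ I ∈ Ω, IsUnit (J I))
    (FI : Fin N → (Fin N → ℝ) → (Fin n → ℝ))
    (hFI : ∀ M I, FI M I = fderiv ℝ F (X I, I) (0, Pi.single M 1))
    (φ : (Fin n → ℝ) → ℝ) (hφ : ContDiff ℝ 1 φ)
    (gradφ : (Fin n → ℝ) → (Fin n → ℝ))
    (hgrad : ∀ x j, gradφ x j = fderiv ℝ φ x (Pi.single j 1))
    (z : (Fin N → ℝ) → ℝ) (hz : ∀ I, z I = φ (X I)) :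
    (∀ (M : Fin N), ∀ I ∈ Ω,
      fderiv ℝ z I (Pi.single M 1) =
        (-(1 / (J I).det)) *
          dotProduct (gradφ (X I)) ((J I).adjugate.mulVec (FI M I))) ∧
    (∀ I₀ ∈ Ω,
      ((∀ M : Fin N, fderiv ℝ z I₀ (Pi.single M 1) = 0) ↔
        (∀ M : Fin N,
          dotProduct (gradφ (X I₀)) ((J I₀).adjugate.mulVec (FI M I₀)) = 0))) := by
  have key : ∀ (M : Fin N), ∀ I ∈ Ω,
      fderiv ℝ z I (Pi.single M 1) =
        (-(1 / (J I).det)) *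
          dotProduct (gradφ (X I)) ((J I).adjugate.mulVec (FI M I)) := by
    intro M I hI
    have hXd : DifferentiableAt ℝ X I :=
      (hX.differentiableOn one_ne_zero).differentiableAt (hΩ.mem_nhds hI)
    have hFd : DifferentiableAt ℝ F (X I, I) := (hF.differentiable one_ne_zero) _
    have hφd : DifferentiableAt ℝ φ (X I) := (hφ.differentiable one_ne_zero) _
    set v : Fin n → ℝ := fderiv ℝ X I (Pi.single M 1) with hv
    have hg : DifferentiableAt ℝ (fun I => (X I, I)) I := hXd.prodMk differentiableAt_id
    have hzero : fderiv ℝ (fun I => F (X I, I)) I = 0 := by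
      have h0 : (fun I => F (X I, I)) =ᶠ[nhds I] fun _ => (0 : Fin n → ℝ) := by
        filter_upwards [hΩ.mem_nhds hI] with K hK using heq K hK
      rw [h0.fderiv_eq]
      exact fderiv_const_apply 0
    have hcomp : fderiv ℝ (fun I => F (X I, I)) I =
        (fderiv ℝ F (X I, I)).comp (fderiv ℝ (fun I => (X I, I)) I) :=
      fderiv_comp I hFd hg
    have hgderiv : fderiv ℝ (fun I => (X I, I)) I (Pi.single M 1) = (v, Pi.single M 1) := by
      have hp : fderiv ℝ (fun x => (X x, id x)) I =
          (fderiv ℝ X I).prod (fderiv ℝ (id : (Fin N → ℝ) → _) I) :=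
        DifferentiableAt.fderiv_prodMk hXd differentiableAt_id
      rw [show (fun I => (X I, I)) = (fun x => (X x, id x)) from rfl, hp]
      simp [fderiv_id, hv]
    have hmain : fderiv ℝ F (X I, I) (v, Pi.single M 1) = 0 := by
      have h1 := DFunLike.congr_fun hzero (Pi.single M 1)
      rw [hcomp] at h1
      simpa [hgderiv] using h1
    have hsplit : fderiv ℝ F (X I, I) (v, (0 : Fin N → ℝ)) = -(FI M I) := by
      have hpair : (v, (Pi.single M 1 : Fin N → ℝ)) =
          (v, (0 : Fin N → ℝ)) + ((0 : Fin n → ℝ), (Pi.single M 1 : Fin N → ℝ)) := by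
        simp
      rw [hpair, map_add] at hmain
      rw [hFI]
      exact eq_neg_of_add_eq_zero_left hmain
    -- express the first slot via the Jacobian
    have hrep : ∀ w : Fin n → ℝ, w = ∑ j, w j • (Pi.single j 1 : Fin n → ℝ) := by
      intro w; funext i; simp [Pi.single_apply]
    have hv0 : fderiv ℝ F (X I, I) (v, (0 : Fin N → ℝ)) = (J I).mulVec v := by
      have hpair2 : (v, (0 : Fin N → ℝ)) =
          ∑ j, v j • ((Pi.single j 1 : Fin n → ℝ), (0 : Fin N → ℝ)) := by
        rw [Prod.ext_iff, Prod.fst_sum, Prod.snd_sum]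
        constructor
        · simpa using (hrep v)
        · simp
      rw [hpair2, map_sum]
      funext i
      rw [Finset.sum_apply, Matrix.mulVec, dotProduct]
      refine Finset.sum_congr rfl fun j _ => ?_
      rw [ContinuousLinearMap.map_smul, hJ]
      simp [mul_comm]
    have hJv : (J I).mulVec v = -(FI M I) := by rw [← hv0, hsplit]
    have hdet : IsUnit (J I).det := (Matrix.isUnit_iff_isUnit_det _).mp (hJinv I hI)
    have hvformula : v = -((J I)⁻¹.mulVec (FI M I)) := by
      have h2 := congrArg (fun w => (J I)⁻¹.mulVec w) hJv
      simp only [Matrix.mulVec_mulVec, Matrix.nonsing_inv_mul _ hdet, Matrix.one_mulVec,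
        Matrix.mulVec_neg] at h2
      simpa using h2
    -- derivative of z
    have hzderiv : fderiv ℝ z I (Pi.single M 1) = fderiv ℝ φ (X I) v := by
      rw [show z = φ ∘ X from funext hz, fderiv_comp I hφd hXd]
      rfl
    have hdot : fderiv ℝ φ (X I) v = dotProduct (gradφ (X I)) v := by
      conv_lhs => rw [hrep v]
      rw [map_sum, dotProduct]
      refine Finset.sum_congr rfl fun j _ => ?_
      rw [ContinuousLinearMap.map_smul, hgrad]
      simp [mul_comm]
    have hinv : (J I)⁻¹ = (J I).det⁻¹ • (J I).adjugate := by
      rw [Matrix.inv_def, Ring.inverse_eq_inv']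
    rw [hzderiv, hdot, hvformula, hinv, Matrix.smul_mulVec]
    rw [dotProduct_neg, dotProduct_smul]
    simp [smul_eq_mul]
    try ring
  refine ⟨key, fun I₀ hI₀ => ?_⟩
  have hdet0 : (J I₀).det ≠ 0 :=
    ((Matrix.isUnit_iff_isUnit_det _).mp (hJinv I₀ hI₀)).ne_zero
  constructor
  · intro h M
    have hk := key M I₀ hI₀
    rw [h M] at hk
    have : (-(1 / (J I₀).det)) ≠ 0 := by
      simp [hdet0]
    rcases mul_eq_zero.mp hk.symm with h' | h'
    · exact absurd h' this
    · exact h'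
  · intro h M
    rw [key M I₀ hI₀, h M, mul_zero]
end

section
/- Let n ≥ 2 and let z : [a, ∞) → ℝ be n times differentiable. Suppose z(I) → c for some real constant c as I → ∞, and suppose each of the derivatives z', z'', …, z⁽ⁿ⁾ is bounded on [a, ∞). Then z⁽ʲ⁾(I) → 0 as I → ∞ for every j with 1 ≤ j ≤ n − 1. -/
open Set Filter

private lemma landau_key {a C c : ℝ} {f f' f'' : ℝ → ℝ}
    (hf : ∀ x ∈ Set.Ici a, HasDerivWithinAt f (f' x) (Set.Ici a) x)
    (hf' : ∀ x ∈ Set.Ici a, HasDerivWithinAt f' (f'' x) (Set.Ici a) x)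
    (hC : ∀ x ∈ Set.Ici a, |f'' x| ≤ C)
    (hlim : Filter.Tendsto f Filter.atTop (nhds c)) :
    Filter.Tendsto f' Filter.atTop (nhds 0) := by
  rw [Metric.tendsto_atTop]
  intro ε hε
  set C' : ℝ := max C 1 with hC'def
  have hC'pos : 0 < C' := lt_of_lt_of_le one_pos (le_max_right _ _)
  set h : ℝ := ε / (2 * C') with hhdef
  have hh : 0 < h := div_pos hε (by positivity)
  obtain ⟨N, hN⟩ := Metric.tendsto_atTop.mp hlim (ε * h / 4) (by positivity)
  refine ⟨max N (a + 1), fun x hx => ?_⟩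
  have hxN : N ≤ x := le_trans (le_max_left _ _) hx
  have hxa : a < x := lt_of_lt_of_le (by linarith [le_max_right N (a + 1)]) le_rfl
  have hxa' : a < x := by
    have := le_trans (le_max_right N (a + 1)) hx; linarith
  have hxmem : x ∈ Set.Ici a := le_of_lt hxa'
  have hxh : x < x + h := by linarith
  -- MVT on [x, x+h]
  have hsub : Set.Icc x (x + h) ⊆ Set.Ici a := fun y hy => le_trans (le_of_lt hxa') hy.1
  have hcont : ContinuousOn f (Set.Icc x (x + h)) := fun y hy =>
    ((hf y (hsub hy)).continuousWithinAt).mono hsub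
  have hdiff : ∀ y ∈ Set.Ioo x (x + h), HasDerivAt f (f' y) y := by
    intro y hy
    have hya : a < y := lt_trans hxa' hy.1
    exact (hf y (le_of_lt hya)).hasDerivAt (Ici_mem_nhds hya)
  obtain ⟨ξ, hξ, hξeq⟩ := exists_hasDerivAt_eq_slope f f' hxh hcont hdiff
  have hξmem : ξ ∈ Set.Ici a := le_of_lt (lt_trans hxa' hξ.1)
  -- bound |f' ξ|
  have hslope : |f' ξ| < ε / 2 := by
    rw [hξeq]
    have h1 : dist (f (x + h)) c < ε * h / 4 := hN (x + h) (by linarith)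
    have h2 : dist (f x) c < ε * h / 4 := hN x hxN
    rw [Real.dist_eq] at h1 h2
    have : |f (x + h) - f x| < ε * h / 2 := by
      calc |f (x + h) - f x| ≤ |f (x + h) - c| + |f x - c| := by
            rw [← abs_sub_comm c (f x)]; exact abs_sub_le _ _ _
        _ < ε * h / 2 := by linarith
    rw [abs_div, abs_of_pos (by linarith : (0:ℝ) < x + h - x)]
    rw [div_lt_iff₀ (by linarith : (0:ℝ) < x + h - x)]
    have : x + h - x = h := by ring
    rw [this]
    calc |f (x + h) - f x| < ε * h / 2 := ‹_›
      _ = ε / 2 * h := by ring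
  -- bound |f' ξ - f' x| via mean value inequality on Ici a
  have hmvi : |f' ξ - f' x| ≤ C' * h := by
    have hbound : ∀ y ∈ Set.Ici a, ‖f'' y‖ ≤ C' := fun y hy => by
      rw [Real.norm_eq_abs]; exact le_trans (hC y hy) (le_max_left _ _)
    have := (convex_Ici a).norm_image_sub_le_of_norm_hasDerivWithin_le hf' hbound hxmem hξmem
    rw [Real.norm_eq_abs, Real.norm_eq_abs] at this
    refine le_trans this ?_
    have hξx : |ξ - x| ≤ h := by
      rw [abs_of_pos (by linarith [hξ.1] : (0:ℝ) < ξ - x)]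
      linarith [hξ.2]
    exact mul_le_mul_of_nonneg_left hξx (le_of_lt hC'pos)
  have hC'h : C' * h = ε / 2 := by
    rw [hhdef]; field_simp
  calc dist (f' x) 0 = |f' x| := by rw [Real.dist_eq, sub_zero]
    _ ≤ |f' ξ - f' x| + |f' ξ| := by
        have := abs_sub_abs_le_abs_sub (f' x) (f' ξ)
        have h2 := abs_sub_le (f' x) (f' ξ) 0
        simp only [sub_zero] at h2
        calc |f' x| ≤ |f' x - f' ξ| + |f' ξ| := h2
          _ = |f' ξ - f' x| + |f' ξ| := by rw [abs_sub_comm]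
    _ < C' * h + ε / 2 := by linarith
    _ = ε := by rw [hC'h]; ring

/-- Hadamard-type lemma. If `z` is `n` times differentiable on `[a, ∞)`
(with `Z j` denoting its `j`-th derivative, `Z 0 = z`), `z(I) → c` as `I → ∞`, and each of
the derivatives `z', …, z⁽ⁿ⁾` is bounded on `[a, ∞)`, then `z⁽ʲ⁾(I) → 0` as `I → ∞` for
every `1 ≤ j ≤ n − 1`. -/
theorem stmt_3 (n : ℕ) (hn : 2 ≤ n) (a c : ℝ) (z : ℝ → ℝ) (Z : ℕ → ℝ → ℝ)
    (hz : Z 0 = z)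
    (hderiv : ∀ j < n, ∀ x ∈ Set.Ici a, HasDerivWithinAt (Z j) (Z (j + 1) x) (Set.Ici a) x)
    (hlim : Filter.Tendsto z Filter.atTop (nhds c))
    (hbdd : ∀ j, 1 ≤ j → j ≤ n → ∃ C, ∀ x ∈ Set.Ici a, |Z j x| ≤ C) :
    ∀ j, 1 ≤ j → j ≤ n - 1 → Filter.Tendsto (Z j) Filter.atTop (nhds 0) := by
  have main : ∀ j, 1 ≤ j → j + 1 ≤ n → Filter.Tendsto (Z j) Filter.atTop (nhds 0) := by
    intro j
    induction j with
    | zero => intro h; omega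
    | succ k ih =>
      intro _ hk1
      rcases Nat.eq_zero_or_pos k with hk | hk
      · subst hk
        obtain ⟨C, hC⟩ := hbdd 2 (by norm_num) hn
        have hlim0 : Filter.Tendsto (Z 0) Filter.atTop (nhds c) := by rw [hz]; exact hlim
        exact landau_key (hderiv 0 (by omega)) (hderiv 1 (by omega)) hC hlim0
      · have hZk := ih hk (by omega)
        obtain ⟨C, hC⟩ := hbdd (k + 2) (by omega) (by omega)
        exact landau_key (hderiv k (by omega)) (hderiv (k + 1) (by omega)) hC hZk
  intro j hj1 hj
  exact main j hj1 (by omega)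
end

section
/- Let F : ℝ^{n+2} × ℝ → ℝ^{n+2} be continuously differentiable, with state coordinates indexed 0, 1, …, n+1, where coordinate 0 is the input node ι and coordinate n+1 is the output node o, and suppose the components F_j for j ≠ 0 do not depend on the parameter I (∂F_j/∂I ≡ 0 for j ≠ 0). Let X : Ω → ℝ^{n+2} be an equilibrium branch on an open set Ω ⊆ ℝ with invertible Jacobian J(I), and let H(I) be the (n+1)×(n+1) homeostasis matrix obtained from J(I) by deleting row 0 and column n+1. Then the input-output function x_o(I) = X_{n+1}(I) satisfies x_o'(I) = (−1)ⁿ · (∂F_0/∂I)(X(I), I) · det H(I) / det J(I). In particular, if ∂F₀/∂I ≠ 0 at I₀, then x_o'(I₀) = 0 if and only if det H(I₀) = 0. -/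
open Matrix

lemma adj_last_zero (n : ℕ) (A : Matrix (Fin (n+2)) (Fin (n+2)) ℝ) :
    A.adjugate (Fin.last (n+1)) 0 = (-1)^(n+1) * (A.submatrix Fin.succ Fin.castSucc).det := by
  rw [Matrix.adjugate_apply, Matrix.det_succ_row_zero]
  rw [Finset.sum_eq_single (Fin.last (n+1))]
  · have hms : ((A.updateRow 0 (Pi.single (Fin.last (n+1)) 1)).submatrix Fin.succ
        (Fin.last (n+1)).succAbove) = A.submatrix Fin.succ Fin.castSucc := by
      ext i j
      rw [Fin.succAbove_last]
      simp [Matrix.updateRow_ne (Fin.succ_ne_zero i)]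
    rw [hms, Matrix.updateRow_self]
    simp only [Pi.single_eq_same, Fin.val_last]
    ring
  · intro j _ hj
    rw [Matrix.updateRow_self, Pi.single_eq_of_ne hj]
    ring
  · simp

/-- For an input-output network with input node `0`, output node `n+1`,
and the parameter entering only the input-node equation, the derivative of the
input-output function `x_o(I) = X_{n+1}(I)` is
`(-1)ⁿ · f_{ι,I} · det H / det J`, where `H` is the homeostasis matrix obtained from the
Jacobian `J` by deleting the input-node row and the output-node column.  In particular,
if `f_{ι,I} ≠ 0`, infinitesimal homeostasis at `I₀` is equivalent to `det H(I₀) = 0`. -/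
theorem stmt_4 (n : ℕ)
    (F : (Fin (n + 2) → ℝ) × ℝ → (Fin (n + 2) → ℝ))
    (hF : ContDiff ℝ 1 F)
    (hInd : ∀ (x : Fin (n + 2) → ℝ) (I I' : ℝ) (j : Fin (n + 2)),
      j ≠ 0 → F (x, I) j = F (x, I') j)
    (Ω : Set ℝ) (hΩ : IsOpen Ω)
    (X : ℝ → (Fin (n + 2) → ℝ))
    (hX : ContDiffOn ℝ 1 X Ω)
    (heq : ∀ I ∈ Ω, F (X I, I) = 0)
    (J : ℝ → Matrix (Fin (n + 2)) (Fin (n + 2)) ℝ)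
    (hJ : ∀ I i j, J I i j = fderiv ℝ F (X I, I) (Pi.single j 1, 0) i)
    (hJinv : ∀ I ∈ Ω, IsUnit (J I))
    (H : ℝ → Matrix (Fin (n + 1)) (Fin (n + 1)) ℝ)
    (hH : ∀ I, H I = (J I).submatrix Fin.succ Fin.castSucc) :
    (∀ I ∈ Ω,
      deriv (fun s => X s (Fin.last (n + 1))) I =
        (-1) ^ n * (fderiv ℝ F (X I, I) (0, 1) 0) * (H I).det / (J I).det) ∧
    (∀ I₀ ∈ Ω, fderiv ℝ F (X I₀, I₀) (0, 1) 0 ≠ 0 →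
      (deriv (fun s => X s (Fin.last (n + 1))) I₀ = 0 ↔ (H I₀).det = 0)) := by
  have hFd : Differentiable ℝ F := hF.differentiable one_ne_zero
  have key : ∀ I ∈ Ω,
      deriv (fun s => X s (Fin.last (n + 1))) I =
        (-1) ^ n * (fderiv ℝ F (X I, I) (0, 1) 0) * (H I).det / (J I).det := by
    intro I hI
    set f := fderiv ℝ F (X I, I) (0, 1) 0 with hf
    have hXd : DifferentiableAt ℝ X I :=
      (hX.differentiableOn one_ne_zero).differentiableAt (hΩ.mem_nhds hI)
    have hXder : HasDerivAt X (deriv X I) I := hXd.hasDerivAt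
    set v := deriv X I with hv
    -- chain rule: DF (v,1) = 0
    have hchain : fderiv ℝ F (X I, I) (v, 1) = 0 := by
      have h1 : HasDerivAt (fun s => (X s, s)) (v, 1) I := HasDerivAt.prodMk hXder (hasDerivAt_id I)
      have h2 : HasDerivAt (fun s => F (X s, s)) (fderiv ℝ F (X I, I) (v, 1)) I :=
        (hFd _).hasFDerivAt.comp_hasDerivAt I h1
      have h3 : HasDerivAt (fun s => F (X s, s)) 0 I := by
        refine (hasDerivAt_const I (0 : Fin (n+2) → ℝ)).congr_of_eventuallyEq ?_
        exact Filter.eventuallyEq_of_mem (hΩ.mem_nhds hI) heq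
      exact h2.unique h3
    -- split linearly
    have hsplit : fderiv ℝ F (X I, I) (v, 1)
        = fderiv ℝ F (X I, I) (v, 0) + fderiv ℝ F (X I, I) (0, 1) := by
      rw [← map_add]
      congr 1
      simp
    -- linear part equals mulVec
    have hlin : fderiv ℝ F (X I, I) (v, 0) = (J I).mulVec v := by
      have hsum : ((v, (0:ℝ)) : (Fin (n+2) → ℝ) × ℝ)
          = ∑ j : Fin (n+2), v j • ((Pi.single j (1:ℝ) : Fin (n+2) → ℝ), (0:ℝ)) := by
        have hps : ∀ j : Fin (n+2), v j • (Pi.single j (1:ℝ) : Fin (n+2) → ℝ) = Pi.single j (v j) :=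
          fun j => by rw [← Pi.single_smul, smul_eq_mul, mul_one]
        rw [Prod.ext_iff]
        constructor
        · simp [Prod.fst_sum, hps, Finset.univ_sum_single]
        · simp [Prod.snd_sum]
      funext i
      rw [hsum, map_sum]
      simp only [ContinuousLinearMap.map_smul]
      rw [Matrix.mulVec, dotProduct]
      simp only [Finset.sum_apply, Pi.smul_apply, smul_eq_mul]
      refine Finset.sum_congr rfl fun j _ => ?_
      rw [hJ I i j]
      ring
    -- components j ≠ 0 of DF(0,1) vanish
    have hzero : ∀ j : Fin (n+2), j ≠ 0 → fderiv ℝ F (X I, I) (0, 1) j = 0 := by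
      intro j hj
      have hcurve : HasDerivAt (fun t : ℝ => F (X I, t)) (fderiv ℝ F (X I, I) (0, 1)) I := by
        have h1 : HasDerivAt (fun t : ℝ => ((X I : Fin (n+2) → ℝ), t))
            ((0 : Fin (n+2) → ℝ), (1:ℝ)) I := HasDerivAt.prodMk (hasDerivAt_const I (X I)) (hasDerivAt_id I)
        exact (hFd _).hasFDerivAt.comp_hasDerivAt I h1
      have hcomp : HasDerivAt (fun t : ℝ => F (X I, t) j) (fderiv ℝ F (X I, I) (0, 1) j) I :=
        hasDerivAt_pi.mp hcurve j
      have hconst : HasDerivAt (fun t : ℝ => F (X I, t) j) 0 I := by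
        have : (fun t : ℝ => F (X I, t) j) = fun _ => F (X I, I) j :=
          funext fun t => hInd (X I) t I j hj
        rw [this]
        exact hasDerivAt_const I _
      exact hcomp.unique hconst
    have hsingle : fderiv ℝ F (X I, I) (0, 1) = Pi.single 0 f := by
      funext j
      by_cases h : j = 0
      · subst h; simp [hf]
      · rw [hzero j h, Pi.single_eq_of_ne h]
    -- the linear system
    have hmv : (J I).mulVec v = -(Pi.single 0 f) := by
      funext i
      have := congrFun hchain i
      rw [hsplit] at this
      simp only [Pi.add_apply, Pi.zero_apply] at this
      rw [hlin, hsingle] at this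
      simp only [Pi.neg_apply]
      linarith [this]
    -- solve for v
    have hdet : IsUnit (J I).det := (Matrix.isUnit_iff_isUnit_det _).mp (hJinv I hI)
    have hdet0 : (J I).det ≠ 0 := by
      intro h
      rw [h] at hdet
      exact (not_isUnit_zero hdet : False)
    have hvsol : v = (J I)⁻¹.mulVec (-(Pi.single 0 f)) := by
      rw [← hmv, Matrix.mulVec_mulVec, Matrix.nonsing_inv_mul _ hdet, Matrix.one_mulVec]
    -- derivative of the component
    have hderivcomp : deriv (fun s => X s (Fin.last (n + 1))) I = v (Fin.last (n + 1)) :=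
      (hasDerivAt_pi.mp hXder (Fin.last (n + 1))).deriv
    rw [hderivcomp, hvsol]
    rw [Matrix.mulVec_neg, Matrix.mulVec_single]
    have hinvapp : (J I)⁻¹ (Fin.last (n+1)) 0
        = ((J I).det)⁻¹ * ((-1)^(n+1) * (H I).det) := by
      rw [Matrix.inv_def, Matrix.smul_apply, adj_last_zero, hH, smul_eq_mul,
        Ring.inverse_eq_inv']
    simp only [Pi.neg_apply, Pi.smul_apply, op_smul_eq_mul, Matrix.col_apply, hinvapp]
    field_simp
    ring
  refine ⟨key, fun I₀ hI₀ hfne => ?_⟩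
  rw [key I₀ hI₀]
  have hdet : IsUnit (J I₀).det := (Matrix.isUnit_iff_isUnit_det _).mp (hJinv I₀ hI₀)
  have hdet0 : (J I₀).det ≠ 0 := by
    intro h
    rw [h] at hdet
    exact (not_isUnit_zero hdet : False)
  have hpow : ((-1 : ℝ)) ^ n ≠ 0 := pow_ne_zero _ (by norm_num)
  rw [div_eq_zero_iff]
  constructor
  · rintro (h | h)
    · rcases mul_eq_zero.mp h with h' | h'
      · rcases mul_eq_zero.mp h' with h'' | h''
        · exact absurd h'' hpow
        · exact absurd h'' hfne
      · exact h'
    · exact absurd h hdet0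
  · intro h
    left
    rw [h, mul_zero]
end

section
/- Let g₁, g₂, g₃, g₄, g₅, f : ℝ → ℝ be continuously differentiable and consider the feedforward excitation system ẋ = I − g₁(x) − g₄(x), ẏ = g₁(x) − g₂(y) − g₅(y), ż = g₂(y) − f(x)·g₃(z). Let (x(I), y(I), z(I)) be a continuously differentiable family of equilibria on a neighborhood of I₀ whose 3×3 Jacobian is invertible at I₀, and write (x₀, y₀, z₀) = (x(I₀), y(I₀), z(I₀)). Then z'(I₀) = 0 if and only if f'(x₀) · g₃(z₀) · (g₂'(y₀) + g₅'(y₀)) = g₁'(x₀) · g₂'(y₀). -/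
/-- (Feedforward excitation.)  For the system
`ẋ = I − g₁(x) − g₄(x)`, `ẏ = g₁(x) − g₂(y) − g₅(y)`, `ż = g₂(y) − f(x)g₃(z)` with a `C¹`
family of equilibria near `I₀` whose Jacobian is invertible at `I₀`, infinitesimal
homeostasis of the output (`z'(I₀) = 0`) holds iff
`f'(x₀) g₃(z₀) (g₂'(y₀) + g₅'(y₀)) = g₁'(x₀) g₂'(y₀)`. -/
theorem stmt_12 (g₁ g₂ g₃ g₄ g₅ f : ℝ → ℝ)
    (hg₁ : ContDiff ℝ 1 g₁) (hg₂ : ContDiff ℝ 1 g₂) (hg₃ : ContDiff ℝ 1 g₃)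
    (hg₄ : ContDiff ℝ 1 g₄) (hg₅ : ContDiff ℝ 1 g₅) (hf : ContDiff ℝ 1 f)
    (Ω : Set ℝ) (hΩ : IsOpen Ω) (I₀ : ℝ) (hI₀ : I₀ ∈ Ω)
    (x y z : ℝ → ℝ)
    (hx : ContDiffOn ℝ 1 x Ω) (hy : ContDiffOn ℝ 1 y Ω) (hz : ContDiffOn ℝ 1 z Ω)
    (heq1 : ∀ I ∈ Ω, I - g₁ (x I) - g₄ (x I) = 0)
    (heq2 : ∀ I ∈ Ω, g₁ (x I) - g₂ (y I) - g₅ (y I) = 0)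
    (heq3 : ∀ I ∈ Ω, g₂ (y I) - f (x I) * g₃ (z I) = 0)
    (hJ : (!![-(deriv g₁ (x I₀)) - deriv g₄ (x I₀), 0, 0;
              deriv g₁ (x I₀), -(deriv g₂ (y I₀)) - deriv g₅ (y I₀), 0;
              -(deriv f (x I₀)) * g₃ (z I₀), deriv g₂ (y I₀),
                -(f (x I₀)) * deriv g₃ (z I₀)]).det ≠ 0) :
    deriv z I₀ = 0 ↔
      deriv f (x I₀) * g₃ (z I₀) * (deriv g₂ (y I₀) + deriv g₅ (y I₀))
        = deriv g₁ (x I₀) * deriv g₂ (y I₀) := by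

  have hxd : HasDerivAt x (deriv x I₀) I₀ :=
    ((hx.contDiffAt (hΩ.mem_nhds hI₀)).differentiableAt one_ne_zero).hasDerivAt
  have hyd : HasDerivAt y (deriv y I₀) I₀ :=
    ((hy.contDiffAt (hΩ.mem_nhds hI₀)).differentiableAt one_ne_zero).hasDerivAt
  have hzd : HasDerivAt z (deriv z I₀) I₀ :=
    ((hz.contDiffAt (hΩ.mem_nhds hI₀)).differentiableAt one_ne_zero).hasDerivAt
  set a := deriv g₁ (x I₀) with ha
  set b := deriv g₂ (y I₀) with hb
  set c := deriv g₃ (z I₀) with hc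
  set d := deriv g₄ (x I₀) with hd
  set e := deriv g₅ (y I₀) with he
  set fp := deriv f (x I₀) with hfp
  set x' := deriv x I₀
  set y' := deriv y I₀
  set z' := deriv z I₀
  have hg1x : HasDerivAt (fun I => g₁ (x I)) (a * x') I₀ :=
    ((hg₁.differentiable one_ne_zero (x I₀)).hasDerivAt).comp I₀ hxd
  have hg4x : HasDerivAt (fun I => g₄ (x I)) (d * x') I₀ :=
    ((hg₄.differentiable one_ne_zero (x I₀)).hasDerivAt).comp I₀ hxd
  have hg2y : HasDerivAt (fun I => g₂ (y I)) (b * y') I₀ :=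
    ((hg₂.differentiable one_ne_zero (y I₀)).hasDerivAt).comp I₀ hyd
  have hg5y : HasDerivAt (fun I => g₅ (y I)) (e * y') I₀ :=
    ((hg₅.differentiable one_ne_zero (y I₀)).hasDerivAt).comp I₀ hyd
  have hfx : HasDerivAt (fun I => f (x I)) (fp * x') I₀ :=
    ((hf.differentiable one_ne_zero (x I₀)).hasDerivAt).comp I₀ hxd
  have hg3z : HasDerivAt (fun I => g₃ (z I)) (c * z') I₀ :=
    ((hg₃.differentiable one_ne_zero (z I₀)).hasDerivAt).comp I₀ hzd
  have hmemΩ : ∀ᶠ I in nhds I₀, I ∈ Ω := hΩ.mem_nhds hI₀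
  -- equation 1 differentiated
  have hD1 : HasDerivAt (fun I => I - g₁ (x I) - g₄ (x I)) (1 - a * x' - d * x') I₀ :=
    ((hasDerivAt_id I₀).sub hg1x).sub hg4x
  have hE1 : HasDerivAt (fun I => I - g₁ (x I) - g₄ (x I)) (0 : ℝ) I₀ := by
    refine (hasDerivAt_const I₀ (0 : ℝ)).congr_of_eventuallyEq ?_
    filter_upwards [hmemΩ] with I hI using heq1 I hI
  have E1 : 1 - a * x' - d * x' = 0 := hD1.unique hE1
  -- equation 2 differentiated
  have hD2 : HasDerivAt (fun I => g₁ (x I) - g₂ (y I) - g₅ (y I)) (a * x' - b * y' - e * y') I₀ :=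
    (hg1x.sub hg2y).sub hg5y
  have hE2 : HasDerivAt (fun I => g₁ (x I) - g₂ (y I) - g₅ (y I)) (0 : ℝ) I₀ := by
    refine (hasDerivAt_const I₀ (0 : ℝ)).congr_of_eventuallyEq ?_
    filter_upwards [hmemΩ] with I hI using heq2 I hI
  have E2 : a * x' - b * y' - e * y' = 0 := hD2.unique hE2
  -- equation 3 differentiated
  have hD3 : HasDerivAt (fun I => g₂ (y I) - f (x I) * g₃ (z I))
      (b * y' - (fp * x' * g₃ (z I₀) + f (x I₀) * (c * z'))) I₀ :=
    hg2y.sub (hfx.mul hg3z)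
  have hE3 : HasDerivAt (fun I => g₂ (y I) - f (x I) * g₃ (z I)) (0 : ℝ) I₀ := by
    refine (hasDerivAt_const I₀ (0 : ℝ)).congr_of_eventuallyEq ?_
    filter_upwards [hmemΩ] with I hI using heq3 I hI
  have E3 : b * y' - (fp * x' * g₃ (z I₀) + f (x I₀) * (c * z')) = 0 := hD3.unique hE3
  -- determinant factorization
  have hdet : (!![-a - d, 0, 0; a, -b - e, 0;
      -fp * g₃ (z I₀), b, -(f (x I₀)) * c]).det
      = (-a - d) * ((-b - e) * (-(f (x I₀)) * c)) := by
    simp [Matrix.det_fin_three]; ring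
  rw [hdet] at hJ
  have h1 : (-a - d) ≠ 0 := fun h => hJ (by rw [h]; ring)
  have h2 : (-b - e) ≠ 0 := fun h => hJ (by rw [h]; ring)
  have h3 : (-(f (x I₀)) * c) ≠ 0 := fun h => hJ (by rw [h]; ring)
  have hx' : x' ≠ 0 := by
    intro h
    rw [h] at E1; norm_num at E1
  constructor
  · intro hz0
    rw [hz0] at E3
    have key : (fp * g₃ (z I₀) * (b + e) - a * b) * x' = 0 := by
      linear_combination -(b + e) * E3 - b * E2
    rcases mul_eq_zero.mp key with h | h
    · linarith
    · exact absurd h hx'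
  · intro hcond
    have key : ((-b - e) * (-(f (x I₀)) * c)) * z' = 0 := by
      linear_combination -(b + e) * E3 - b * E2 - x' * hcond
    rcases mul_eq_zero.mp key with h | h
    · exact absurd h (mul_ne_zero h2 h3)
    · exact h
end

section
/- Let φ : ℝ × ℝ → ℝ be differentiable and let γ_R, γ_B, k₁, k₂, k₃ be real constants. Define f₁(x₁, σ, I) = γ_R(1 − φ(x₁, I)) − γ_B σ² φ(x₁, I) and f₂(x₁, x₂, σ, y, I) = φ(x₁, I)·k₁·(1 − x₂) − k₂(1 − y)x₂ − k₃(1 − σ)x₂. Then at every point, (∂f₁/∂I)·(∂f₂/∂x₁) − (∂f₂/∂I)·(∂f₁/∂x₁) = 0 identically. -/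
/-- (Input counterweight identity of the E. coli chemotaxis model.)
For the two input-node right-hand sides `f₁`, `f₂` of the Edgington–Tindall model, built
from an arbitrary differentiable function `φ`, one has identically
`(∂f₁/∂I)(∂f₂/∂x₁) − (∂f₂/∂I)(∂f₁/∂x₁) = 0`. -/
theorem stmt_13 (φ : ℝ × ℝ → ℝ) (hφ : Differentiable ℝ φ)
    (γR γB k₁ k₂ k₃ : ℝ)
    (f₁ : ℝ → ℝ → ℝ → ℝ)
    (hf₁ : ∀ x₁ σ I, f₁ x₁ σ I = γR * (1 - φ (x₁, I)) - γB * σ ^ 2 * φ (x₁, I))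
    (f₂ : ℝ → ℝ → ℝ → ℝ → ℝ → ℝ)
    (hf₂ : ∀ x₁ x₂ σ y I, f₂ x₁ x₂ σ y I =
      φ (x₁, I) * k₁ * (1 - x₂) - k₂ * (1 - y) * x₂ - k₃ * (1 - σ) * x₂) :
    ∀ x₁ x₂ σ y I : ℝ,
      deriv (fun s => f₁ x₁ σ s) I * deriv (fun t => f₂ t x₂ σ y I) x₁
        - deriv (fun s => f₂ x₁ x₂ σ y s) I * deriv (fun t => f₁ t σ I) x₁ = 0 := by
  intro x₁ x₂ σ y I
  set a : ℝ := fderiv ℝ φ (x₁, I) (0, 1) with ha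
  set b : ℝ := fderiv ℝ φ (x₁, I) (1, 0) with hb
  have hga : HasDerivAt (fun s : ℝ => φ (x₁, s)) a I := by
    have h1 : HasDerivAt (fun s : ℝ => ((x₁, s) : ℝ × ℝ)) ((0 : ℝ), (1 : ℝ)) I :=
      (hasDerivAt_const I x₁).prodMk (hasDerivAt_id I)
    exact (hφ (x₁, I)).hasFDerivAt.comp_hasDerivAt I h1
  have hgb : HasDerivAt (fun t : ℝ => φ (t, I)) b x₁ := by
    have h1 : HasDerivAt (fun t : ℝ => ((t, I) : ℝ × ℝ)) ((1 : ℝ), (0 : ℝ)) x₁ :=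
      (hasDerivAt_id x₁).prodMk (hasDerivAt_const x₁ I)
    exact (hφ (x₁, I)).hasFDerivAt.comp_hasDerivAt x₁ h1
  have d1 : deriv (fun s => f₁ x₁ σ s) I = γR * (-a) - γB * σ ^ 2 * a := by
    have : HasDerivAt (fun s => f₁ x₁ σ s) (γR * (-a) - γB * σ ^ 2 * a) I := by
      have h := (((hasDerivAt_const I (1:ℝ)).sub hga).const_mul γR).sub
        (hga.const_mul (γB * σ ^ 2))
      simpa [hf₁, sub_eq_add_neg, Pi.add_def, Pi.neg_def] using h
    exact this.deriv
  have d2 : deriv (fun t => f₂ t x₂ σ y I) x₁ = b * k₁ * (1 - x₂) := by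
    have : HasDerivAt (fun t => f₂ t x₂ σ y I) (b * k₁ * (1 - x₂)) x₁ := by
      have h := (((hgb.mul_const k₁).mul_const (1 - x₂)).sub
        (hasDerivAt_const x₁ (k₂ * (1 - y) * x₂))).sub
        (hasDerivAt_const x₁ (k₃ * (1 - σ) * x₂))
      simpa [hf₂, Pi.sub_def] using h
    exact this.deriv
  have d3 : deriv (fun s => f₂ x₁ x₂ σ y s) I = a * k₁ * (1 - x₂) := by
    have : HasDerivAt (fun s => f₂ x₁ x₂ σ y s) (a * k₁ * (1 - x₂)) I := by
      have h := (((hga.mul_const k₁).mul_const (1 - x₂)).sub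
        (hasDerivAt_const I (k₂ * (1 - y) * x₂))).sub
        (hasDerivAt_const I (k₃ * (1 - σ) * x₂))
      simpa [hf₂, Pi.sub_def] using h
    exact this.deriv
  have d4 : deriv (fun t => f₁ t σ I) x₁ = γR * (-b) - γB * σ ^ 2 * b := by
    have : HasDerivAt (fun t => f₁ t σ I) (γR * (-b) - γB * σ ^ 2 * b) x₁ := by
      have h := (((hasDerivAt_const x₁ (1:ℝ)).sub hgb).const_mul γR).sub
        (hgb.const_mul (γB * σ ^ 2))
      simpa [hf₁, sub_eq_add_neg, Pi.add_def, Pi.neg_def] using h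
    exact this.deriv
  rw [d1, d2, d3, d4]; ring
end

section
/- Let φ : ℝ × ℝ → ℝ be continuously differentiable and let γ_R, γ_B, k₁, k₂, k₃, k₄, k₅, α₁, α₂ be real constants. Define F : ℝ⁴ × ℝ → ℝ⁴ on variables (x₁, x₂, σ, y) by F₁ = γ_R(1 − φ(x₁, I)) − γ_B σ² φ(x₁, I); F₂ = φ(x₁, I)k₁(1 − x₂) − k₂(1 − y)x₂ − k₃(1 − σ)x₂; F₃ = α₂k₃(1 − σ)x₂ − k₅σ; F₄ = α₁k₂(1 − y)x₂ − k₄y. Let X : Ω → ℝ⁴ be a continuously differentiable equilibrium branch on an open interval Ω ⊆ ℝ (F(X(I), I) = 0 for all I) whose 4×4 Jacobian J(I) is invertible for all I ∈ Ω. Then the output component y(I) = X₄(I) satisfies y'(I) = 0 for all I ∈ Ω; that is, the model exhibits perfect homeostasis of the output. -/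
set_option maxHeartbeats 2000000 in

/-- The Edgington–Tindall model of E. coli chemotaxis exhibits perfect
homeostasis of the output: along any `C¹` equilibrium branch with invertible Jacobian on
an open interval `Ω`, the output component `y(I) = X₄(I)` satisfies `y'(I) = 0`
for all `I ∈ Ω`. -/
theorem stmt_14 (φ : ℝ × ℝ → ℝ) (hφ : ContDiff ℝ 1 φ)
    (γR γB k₁ k₂ k₃ k₄ k₅ α₁ α₂ : ℝ)
    (F : (Fin 4 → ℝ) × ℝ → (Fin 4 → ℝ))
    (hF : ∀ (v : Fin 4 → ℝ) (I : ℝ),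
      F (v, I) = ![γR * (1 - φ (v 0, I)) - γB * (v 2) ^ 2 * φ (v 0, I),
                   φ (v 0, I) * k₁ * (1 - v 1) - k₂ * (1 - v 3) * v 1 - k₃ * (1 - v 2) * v 1,
                   α₂ * k₃ * (1 - v 2) * v 1 - k₅ * v 2,
                   α₁ * k₂ * (1 - v 3) * v 1 - k₄ * v 3])
    (Ω : Set ℝ) (hΩ : IsOpen Ω) (hΩ' : Ω.OrdConnected)
    (X : ℝ → Fin 4 → ℝ) (hX : ContDiffOn ℝ 1 X Ω)
    (heq : ∀ I ∈ Ω, F (X I, I) = 0)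
    (hJ : ∀ I ∈ Ω,
      (Matrix.of (fun i j : Fin 4 =>
        fderiv ℝ F (X I, I) (Pi.single j 1, 0) i)).det ≠ 0) :
    ∀ I ∈ Ω, deriv (fun s => X s 3) I = 0 := by
  intro I hI
  have hF' : ∀ z : (Fin 4 → ℝ) × ℝ, F z =
      ![γR * (1 - φ (z.1 0, z.2)) - γB * (z.1 2) ^ 2 * φ (z.1 0, z.2),
        φ (z.1 0, z.2) * k₁ * (1 - z.1 1) - k₂ * (1 - z.1 3) * z.1 1 - k₃ * (1 - z.1 2) * z.1 1,
        α₂ * k₃ * (1 - z.1 2) * z.1 1 - k₅ * z.1 2,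
        α₁ * k₂ * (1 - z.1 3) * z.1 1 - k₄ * z.1 3] := fun z => hF z.1 z.2
  set x : Fin 4 → ℝ := X I with hx
  set p0 : (Fin 4 → ℝ) × ℝ := (x, I) with hp0
  set Dφ := fderiv ℝ φ (x 0, I) with hDφ
  set Lg : ((Fin 4 → ℝ) × ℝ) →L[ℝ] ℝ × ℝ :=
    ((ContinuousLinearMap.proj 0).comp (ContinuousLinearMap.fst ℝ (Fin 4 → ℝ) ℝ)).prod
      (ContinuousLinearMap.snd ℝ (Fin 4 → ℝ) ℝ) with hLg
  have hφd : DifferentiableAt ℝ φ (x 0, I) := (hφ.differentiable one_ne_zero) _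
  have hψ : HasFDerivAt (fun z : (Fin 4 → ℝ) × ℝ => φ (z.1 0, z.2)) (Dφ.comp Lg) p0 :=
    HasFDerivAt.comp p0 hφd.hasFDerivAt Lg.hasFDerivAt
  have hproj : ∀ j : Fin 4, HasFDerivAt (fun z : (Fin 4 → ℝ) × ℝ => z.1 j)
      ((ContinuousLinearMap.proj j).comp (ContinuousLinearMap.fst ℝ (Fin 4 → ℝ) ℝ)) p0 :=
    fun j => ((ContinuousLinearMap.proj j).comp
      (ContinuousLinearMap.fst ℝ (Fin 4 → ℝ) ℝ)).hasFDerivAt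
  -- the four component functions
  have e0 : (fun z : (Fin 4 → ℝ) × ℝ => F z 0) =
      fun z => γR * (1 - φ (z.1 0, z.2)) - γB * (z.1 2 * z.1 2) * φ (z.1 0, z.2) := by
    funext z; rw [hF' z]; simp [sq]
  have e1 : (fun z : (Fin 4 → ℝ) × ℝ => F z 1) =
      fun z => φ (z.1 0, z.2) * k₁ * (1 - z.1 1) - k₂ * (1 - z.1 3) * z.1 1
        - k₃ * (1 - z.1 2) * z.1 1 := by
    funext z; rw [hF' z]; simp
  have e2 : (fun z : (Fin 4 → ℝ) × ℝ => F z 2) =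
      fun z => α₂ * k₃ * (1 - z.1 2) * z.1 1 - k₅ * z.1 2 := by
    funext z; rw [hF' z]; simp
  have e3 : (fun z : (Fin 4 → ℝ) × ℝ => F z 3) =
      fun z => α₁ * k₂ * (1 - z.1 3) * z.1 1 - k₄ * z.1 3 := by
    funext z; rw [hF' z]; simp
  have h0 := (((hψ.const_sub 1).const_mul γR).sub
      ((((hproj 2).mul (hproj 2)).const_mul γB).mul hψ))
  have h1 := (((hψ.mul_const k₁).mul ((hproj 1).const_sub 1)).sub
      ((((hproj 3).const_sub 1).const_mul k₂).mul (hproj 1))).sub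
      ((((hproj 2).const_sub 1).const_mul k₃).mul (hproj 1))
  have h2 := ((((hproj 2).const_sub 1).const_mul (α₂ * k₃)).mul (hproj 1)).sub
      ((hproj 2).const_mul k₅)
  have h3 := ((((hproj 3).const_sub 1).const_mul (α₁ * k₂)).mul (hproj 1)).sub
      ((hproj 3).const_mul k₄)
  have d0 : DifferentiableAt ℝ (fun z : (Fin 4 → ℝ) × ℝ => F z 0) p0 := by
    rw [e0]; exact h0.differentiableAt
  have d1 : DifferentiableAt ℝ (fun z : (Fin 4 → ℝ) × ℝ => F z 1) p0 := by
    rw [e1]; exact h1.differentiableAt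
  have d2 : DifferentiableAt ℝ (fun z : (Fin 4 → ℝ) × ℝ => F z 2) p0 := by
    rw [e2]; exact h2.differentiableAt
  have d3 : DifferentiableAt ℝ (fun z : (Fin 4 → ℝ) × ℝ => F z 3) p0 := by
    rw [e3]; exact h3.differentiableAt
  have hdiff : ∀ i : Fin 4, DifferentiableAt ℝ (fun z : (Fin 4 → ℝ) × ℝ => F z i) p0 := by
    intro i; fin_cases i
    exacts [d0, d1, d2, d3]
  have hdF : DifferentiableAt ℝ F p0 := differentiableAt_pi.2 hdiff
  set E := fderiv ℝ F p0 with hE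
  have hEpi : ∀ (w : (Fin 4 → ℝ) × ℝ) (i : Fin 4),
      E w i = fderiv ℝ (fun z : (Fin 4 → ℝ) × ℝ => F z i) p0 w := by
    intro w i
    rw [hE, fderiv_pi hdiff]
    rfl
  set p : ℝ := Dφ (1, 0) with hpd
  set q : ℝ := Dφ (0, 1) with hqd
  set c : Fin 4 → ℝ := ![-(γR + γB * (x 2 * x 2)), k₁ * (1 - x 1), 0, 0] with hc
  set w1 : (Fin 4 → ℝ) × ℝ := (Pi.single (0 : Fin 4) (1 : ℝ), (0 : ℝ)) with hw1
  set w2 : (Fin 4 → ℝ) × ℝ := ((0 : Fin 4 → ℝ), (1 : ℝ)) with hw2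
  -- column 0 of the Jacobian
  have hcol0 : E w1 0 = p * c 0 := by
    rw [hEpi, e0]; erw [h0.fderiv]
    simp [hw1, hLg, Pi.single_apply, hc]; ring
  have hcol1 : E w1 1 = p * c 1 := by
    rw [hEpi, e1]; erw [h1.fderiv]
    simp [hw1, hLg, Pi.single_apply, hc]; ring
  have hcol2 : E w1 2 = p * c 2 := by
    rw [hEpi, e2]; erw [h2.fderiv]
    simp [hw1, hLg, Pi.single_apply, hc]
  have hcol3 : E w1 3 = p * c 3 := by
    rw [hEpi, e3]; erw [h3.fderiv]
    simp [hw1, hLg, Pi.single_apply, hc]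
  have hcol : ∀ i : Fin 4, E w1 i = p * c i := by
    intro i; fin_cases i
    exacts [hcol0, hcol1, hcol2, hcol3]
  -- the ∂/∂I column
  have hb0 : E w2 0 = q * c 0 := by
    rw [hEpi, e0]; erw [h0.fderiv]
    simp [hw2, hLg, hc]; ring
  have hb1 : E w2 1 = q * c 1 := by
    rw [hEpi, e1]; erw [h1.fderiv]
    simp [hw2, hLg, hc]; ring
  have hb2 : E w2 2 = q * c 2 := by
    rw [hEpi, e2]; erw [h2.fderiv]
    simp [hw2, hLg, hc]
  have hb3 : E w2 3 = q * c 3 := by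
    rw [hEpi, e3]; erw [h3.fderiv]
    simp [hw2, hLg, hc]
  have hb : ∀ i : Fin 4, E w2 i = q * c i := by
    intro i; fin_cases i
    exacts [hb0, hb1, hb2, hb3]
  -- derivative of the branch
  have hmem : Ω ∈ nhds I := hΩ.mem_nhds hI
  have hXd : HasDerivAt X (deriv X I) I :=
    (((hX.contDiffAt hmem).differentiableAt one_ne_zero)).hasDerivAt
  set u : Fin 4 → ℝ := deriv X I with hu
  have hcurve : HasDerivAt (fun s => (X s, s)) (u, 1) I := hXd.prodMk (hasDerivAt_id I)
  have hcomp : HasDerivAt (fun s => F (X s, s)) (E (u, 1)) I :=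
    HasFDerivAt.comp_hasDerivAt (f := fun s => (X s, s)) I hdF.hasFDerivAt hcurve
  have hzero : E (u, 1) = 0 := by
    rw [← hcomp.deriv]
    have hev : (fun s => F (X s, s)) =ᶠ[nhds I] (fun _ => (0 : Fin 4 → ℝ)) :=
      Filter.eventuallyEq_of_mem hmem (fun s hs => heq s hs)
    rw [hev.deriv_eq]
    exact deriv_const _ _
  -- decompose (u, 1)
  have hsum : (∑ j : Fin 4, u j • ((Pi.single j 1 : Fin 4 → ℝ), (0 : ℝ)))
      = ((u, (0 : ℝ)) : (Fin 4 → ℝ) × ℝ) := by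
    have h1' : ∀ j : Fin 4, u j • ((Pi.single j 1 : Fin 4 → ℝ), (0 : ℝ))
        = ((Pi.single j (u j) : Fin 4 → ℝ), (0 : ℝ)) := by
      intro j
      apply Prod.ext
      · funext k
        simp [Pi.single_apply, mul_comm]
      · simp
    rw [Finset.sum_congr rfl (fun j _ => h1' j)]
    apply Prod.ext
    · rw [Prod.fst_sum]
      exact Finset.univ_sum_single u
    · rw [Prod.snd_sum]
      simp
  have hdec : ((u, (1 : ℝ)) : (Fin 4 → ℝ) × ℝ) = w2 + (u, (0 : ℝ)) := by
    rw [hw2, Prod.mk_add_mk]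
    simp
  have hlin : ∀ i : Fin 4, E w2 i + ∑ j : Fin 4, u j * E (Pi.single j 1, (0 : ℝ)) i = 0 := by
    intro i
    have : E (u, 1) i = 0 := by rw [hzero]; rfl
    rw [hdec, ← hsum] at this
    rw [map_add, map_sum] at this
    simp only [map_smul] at this
    simpa [Finset.sum_apply, Pi.smul_apply, smul_eq_mul] using this
  set J : Matrix (Fin 4) (Fin 4) ℝ :=
    Matrix.of (fun i j : Fin 4 => E (Pi.single j 1, (0 : ℝ)) i) with hJdef
  set bb : Fin 4 → ℝ := fun i => E w2 i with hbb
  have hmv : J.mulVec u = -bb := by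
    funext i
    have h := hlin i
    simp only [Matrix.mulVec, dotProduct, Matrix.of_apply, Pi.neg_apply, hJdef, hbb]
    have : ∑ j : Fin 4, E (Pi.single j 1, (0 : ℝ)) i * u j
        = ∑ j : Fin 4, u j * E (Pi.single j 1, (0 : ℝ)) i :=
      Finset.sum_congr rfl (fun j _ => mul_comm _ _)
    rw [this]
    linarith
  -- Cramer's rule
  have hcramer : J.det • u = (J.adjugate).mulVec (-bb) := by
    rw [← hmv, Matrix.mulVec_mulVec, Matrix.adjugate_mul, Matrix.smul_mulVec,
      Matrix.one_mulVec]
  have hu3 : J.det * u 3 = (J.updateCol 3 (-bb)).det := by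
    have h1' : (J.det • u) 3 = J.det * u 3 := rfl
    rw [← Matrix.cramer_apply, Matrix.cramer_eq_adjugate_mulVec, ← hcramer]
    exact h1'.symm
  -- the crucial determinant vanishes
  have hbneg : -bb = (-q) • c := by
    funext i
    rw [Pi.neg_apply, show bb i = q * c i from hb i, Pi.smul_apply, smul_eq_mul]
    ring
  have hdet0 : (J.updateCol 3 (-bb)).det = 0 := by
    rw [hbneg, Matrix.det_updateCol_smul]
    set N : Matrix (Fin 4) (Fin 4) ℝ := J.updateCol 3 c with hN
    have hN0 : ∀ k, N k 0 = p * c k := by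
      intro k
      rw [hN, Matrix.updateCol_ne (by decide : (0 : Fin 4) ≠ 3)]
      exact hcol k
    have hNsmul : N = N.updateCol 0 (p • c) := by
      funext i j
      rw [Matrix.updateCol_apply]
      split_ifs with h
      · subst h; rw [hN0]; rfl
      · rfl
    rw [hNsmul, Matrix.det_updateCol_smul]
    have : (N.updateCol 0 c).det = 0 := by
      apply Matrix.det_zero_of_column_eq (show (0 : Fin 4) ≠ 3 by decide)
      intro k
      rw [Matrix.updateCol_self,
        Matrix.updateCol_ne (by decide : (3 : Fin 4) ≠ 0), hN,
        Matrix.updateCol_self]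
    rw [this]
    ring
  -- conclude
  have hJI := hJ I hI
  have hu3' : u 3 = 0 := by
    have := hu3.trans hdet0
    rcases mul_eq_zero.1 this with h | h
    · exact absurd h hJI
    · exact h
  have hcomp3 : HasDerivAt (fun s => X s 3) (u 3) I :=
    (ContinuousLinearMap.proj (R := ℝ) (φ := fun _ : Fin 4 => ℝ)
      3).hasFDerivAt.comp_hasDerivAt I hXd
  rw [hcomp3.deriv, hu3']
end

section
/- Let V be a finite type, let E : V → V → Prop be a directed graph, and let ι, o ∈ V. Define an ιo-simple path to be a finite list of pairwise distinct vertices whose first entry is ι, whose last entry is o, and whose consecutive entries are joined by E-edges; call a vertex super-simple if it occurs on every ιo-simple path. Then the order of appearance of super-simple vertices is independent of the path: if ρ₁ and ρ₂ are super-simple vertices and p and q are any two ιo-simple paths, then ρ₁ occurs strictly before ρ₂ in p if and only if ρ₁ occurs strictly before ρ₂ in q. -/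
/-- Decompose a list around a duplicated element. -/
theorem stmt16_dup_decomp' {α : Type*} {a : α} {l : List α} (hd : List.Duplicate a l) :
    ∃ (s u w : List α), l = s ++ a :: (u ++ a :: w) := by
  induction hd with
  | cons_mem h' =>
      obtain ⟨u, w, rfl⟩ := List.mem_iff_append.1 h'
      exact ⟨[], u, w, rfl⟩
  | cons_duplicate _ ih =>
      obtain ⟨s, u, w, rfl⟩ := ih
      rename_i b _
      exact ⟨b :: s, u, w, rfl⟩

/-- Decompose a non-nodup list around a duplicated element. -/
theorem stmt16_dup_decomp {α : Type*} {l : List α} (h : ¬ l.Nodup) :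
    ∃ (a : α) (s u w : List α), l = s ++ a :: (u ++ a :: w) := by
  obtain ⟨a, hd⟩ := List.exists_duplicate_iff_not_nodup.2 h
  exact ⟨a, stmt16_dup_decomp' hd⟩

/-- Loop erasure: any chain has a nodup chain with same endpoints and vertices among
its vertices. -/
theorem stmt16_loop_erase_aux {α : Type*} (E : α → α → Prop) :
    ∀ (n : ℕ) (l : List α), l.length ≤ n → l.Chain' E →
      ∃ m : List α, m.Nodup ∧ m.Chain' E ∧ m.head? = l.head? ∧
        m.getLast? = l.getLast? ∧ ∀ v ∈ m, v ∈ l := by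
  intro n
  induction n with
  | zero =>
      intro l hl hc
      exact ⟨l, by simp [List.length_eq_zero_iff.1 (Nat.le_zero.1 hl)], hc, rfl, rfl,
        fun v hv => hv⟩
  | succ n ih =>
      intro l hl hc
      by_cases hnd : l.Nodup
      · exact ⟨l, hnd, hc, rfl, rfl, fun v hv => hv⟩
      · obtain ⟨a, s, u, w, rfl⟩ := stmt16_dup_decomp hnd
        have hsuf : (a :: w) <:+ (a :: (u ++ a :: w)) := ⟨a :: u, by simp⟩
        have hc' : (s ++ a :: w).Chain' E := by
          rw [List.Chain', List.isChain_append] at hc ⊢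
          exact ⟨hc.1, hc.2.1.suffix hsuf, by simpa using hc.2.2⟩
        have hlen : (s ++ a :: w).length ≤ n := by
          simp only [List.length_append, List.length_cons] at hl ⊢
          omega
        obtain ⟨m, mN, mC, mH, mL, msub⟩ := ih (s ++ a :: w) hlen hc'
        refine ⟨m, mN, mC, ?_, ?_, ?_⟩
        · rw [mH]; simp [List.head?_append]
        · rw [mL]
          rw [List.getLast?_append, List.getLast?_append]
          have h1 : (a :: w).getLast? = some ((a :: w).getLast (by simp)) :=
            List.getLast?_eq_getLast _
          have h2 : (a :: (u ++ a :: w)).getLast? = (a :: w).getLast? := by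
            have : a :: (u ++ a :: w) = (a :: u) ++ (a :: w) := by simp
            rw [this, List.getLast?_append, h1]
            rfl
          rw [h2, h1]
        · intro v hv
          have := msub v hv
          simp only [List.mem_append, List.mem_cons] at this ⊢
          tauto

theorem stmt16_loop_erase {α : Type*} (E : α → α → Prop) (l : List α) (hc : l.Chain' E) :
    ∃ m : List α, m.Nodup ∧ m.Chain' E ∧ m.head? = l.head? ∧
      m.getLast? = l.getLast? ∧ ∀ v ∈ m, v ∈ l :=
  stmt16_loop_erase_aux E l.length l le_rfl hc

/-- Key step: if `ρ₁` appears before `ρ₂` on `p` then also on `q`. -/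
theorem stmt16_key {V : Type*} {E : V → V → Prop} {ι o : V} {p q : List V}
    (hpN : p.Nodup) (hpH : p.head? = some ι) (hpL : p.getLast? = some o) (hpC : p.Chain' E)
    (hqN : q.Nodup) (hqL : q.getLast? = some o) (hqC : q.Chain' E)
    {ρ₁ ρ₂ : V} (hm₁ : ρ₁ ∈ q) (hm₂ : ρ₂ ∈ q)
    (hss : ∀ r : List V, r.Nodup → r.head? = some ι → r.getLast? = some o →
      r.Chain' E → ρ₂ ∈ r)
    (h : ∃ i j : Fin p.length, (i : ℕ) < (j : ℕ) ∧ p.get i = ρ₁ ∧ p.get j = ρ₂) :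
    ∃ i j : Fin q.length, (i : ℕ) < (j : ℕ) ∧ q.get i = ρ₁ ∧ q.get j = ρ₂ := by
  obtain ⟨i, j, hij, hi, hj⟩ := h
  have hne : ρ₁ ≠ ρ₂ := by
    intro e
    have : i = j := hpN.get_inj_iff.1 (by rw [hi, hj, e])
    omega
  obtain ⟨i', hi'⟩ := List.mem_iff_get.1 hm₁
  obtain ⟨j', hj'⟩ := List.mem_iff_get.1 hm₂
  rcases lt_trichotomy (i' : ℕ) (j' : ℕ) with hlt | heq | hgt
  · exact ⟨i', j', hlt, hi', hj'⟩
  · exact absurd (by rw [← hi', ← hj', Fin.ext heq]) hne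
  · -- ρ₂ appears strictly before ρ₁ on q : derive a contradiction
    exfalso
    by_cases hlast : (i' : ℕ) + 1 < q.length
    · -- splice p.take (i+1) with q.drop (i'+1)
      set r : List V := p.take ((i : ℕ) + 1) ++ q.drop ((i' : ℕ) + 1) with hr
      have htake_last : (p.take ((i : ℕ) + 1)).getLast? = some (p.get i) := by
        rw [← List.take_concat_get i.isLt, List.concat_eq_append,
          List.getLast?_concat]
        rfl
      have hdrop_head : (q.drop ((i' : ℕ) + 1)).head? = some (q.get ⟨(i' : ℕ) + 1, hlast⟩) := by
        rw [List.head?_drop, List.getElem?_eq_getElem hlast]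
        rfl
      have rC : r.Chain' E := by
        rw [hr, List.Chain', List.isChain_append]
        refine ⟨hpC.prefix (List.take_prefix _ _), hqC.suffix (List.drop_suffix _ _), ?_⟩
        intro x hx y hy
        rw [htake_last] at hx
        rw [hdrop_head] at hy
        simp only [Option.mem_def, Option.some.injEq] at hx hy
        subst hx; subst hy
        have hE := List.isChain_iff_getElem.1 hqC (i' : ℕ) (by omega)
        simp only [List.get_eq_getElem] at hi hi' ⊢
        rw [hi'] at hE
        rw [hi]
        exact hE
      have rH : r.head? = some ι := by
        rw [hr, List.head?_append, List.head?_take]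
        simp [hpH]
      have rL : r.getLast? = some o := by
        rw [hr, List.getLast?_append, List.getLast?_drop, if_neg (by omega), hqL]
        rfl
      have hnotin : ρ₂ ∉ r := by
        intro hmem
        rw [hr, List.mem_append] at hmem
        rcases hmem with hmem | hmem
        · obtain ⟨k, hk⟩ := List.mem_iff_get.1 hmem
          have hklt : (k : ℕ) < (i : ℕ) + 1 := by
            have := k.isLt
            simp only [List.length_take] at this
            omega
          have hklen : (k : ℕ) < p.length := by
            have := k.isLt
            simp only [List.length_take] at this
            omega
          have : p.get ⟨(k : ℕ), hklen⟩ = ρ₂ := by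
            simp only [List.get_eq_getElem, List.getElem_take] at hk ⊢
            convert hk using 2
          have heqj : (⟨(k : ℕ), hklen⟩ : Fin p.length) = j :=
            hpN.get_inj_iff.1 (by rw [this, hj])
          have : (k : ℕ) = (j : ℕ) := by rw [← heqj]
          omega
        · obtain ⟨k, hk⟩ := List.mem_iff_get.1 hmem
          have hklen : (i' : ℕ) + 1 + (k : ℕ) < q.length := by
            have := k.isLt
            simp only [List.length_drop] at this
            omega
          have : q.get ⟨(i' : ℕ) + 1 + (k : ℕ), hklen⟩ = ρ₂ := by
            rw [← hk]; simp [List.getElem_drop]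
          have heqj : (⟨(i' : ℕ) + 1 + (k : ℕ), hklen⟩ : Fin q.length) = j' :=
            hqN.get_inj_iff.1 (by rw [this, hj'])
          have : (i' : ℕ) + 1 + (k : ℕ) = (j' : ℕ) := by rw [← heqj]
          omega
      obtain ⟨m, mN, mC, mH, mL, msub⟩ := stmt16_loop_erase E r rC
      exact hnotin (msub _ (hss m mN (mH.trans rH) (mL.trans rL) mC))
    · -- i' is the last index of q, so ρ₁ = o; contradiction with nodupness of p
      have hi'eq : (i' : ℕ) = q.length - 1 := by have := i'.isLt; omega
      have hget : q.getLast? = some (q.get ⟨q.length - 1, by have := i'.isLt; omega⟩) := by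
        rw [List.getLast?_eq_getElem?, List.getElem?_eq_getElem (by have := i'.isLt; omega)]
        rfl
      have hρ₁o : ρ₁ = o := by
        have h1 : q.get i' = q.get ⟨q.length - 1, by have := i'.isLt; omega⟩ := by
          congr 1
          exact Fin.ext hi'eq
        rw [hqL] at hget
        rw [← hi', h1, ← Option.some.inj hget]
      -- p's last entry is o = ρ₁ = p.get i, so i = p.length - 1, contradicting i < j
      have hplen : 0 < p.length := i.pos
      have hpget : p.getLast? = some (p.get ⟨p.length - 1, by omega⟩) := by
        rw [List.getLast?_eq_getElem?, List.getElem?_eq_getElem (by omega)]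
        rfl
      rw [hpL] at hpget
      have : p.get i = p.get ⟨p.length - 1, by omega⟩ := by
        rw [hi, hρ₁o]
        exact Option.some.inj hpget
      have heqi : i = (⟨p.length - 1, by omega⟩ : Fin p.length) := hpN.get_inj_iff.1 this
      have : (i : ℕ) = p.length - 1 := by rw [heqi]
      have := j.isLt
      omega

/-- The order of appearance of super-simple nodes on an `ιo`-simple
path is independent of the chosen path: if `ρ₁`, `ρ₂` occur on every `ιo`-simple path,
then `ρ₁` occurs strictly before `ρ₂` on one `ιo`-simple path iff it does on any
other. -/
theorem stmt_16 {V : Type*} [Fintype V] (E : V → V → Prop) (ι o : V)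
    (IsIOPath : List V → Prop)
    (hPath : ∀ p : List V, IsIOPath p ↔
      p.Nodup ∧ p.head? = some ι ∧ p.getLast? = some o ∧ List.Chain' E p)
    (SuperSimple : V → Prop)
    (hSS : ∀ v, SuperSimple v ↔ ∀ p : List V, IsIOPath p → v ∈ p)
    (ρ₁ ρ₂ : V) (h₁ : SuperSimple ρ₁) (h₂ : SuperSimple ρ₂)
    (p q : List V) (hp : IsIOPath p) (hq : IsIOPath q) :
    ((∃ i j : Fin p.length, (i : ℕ) < (j : ℕ) ∧ p.get i = ρ₁ ∧ p.get j = ρ₂) ↔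
      (∃ i j : Fin q.length, (i : ℕ) < (j : ℕ) ∧ q.get i = ρ₁ ∧ q.get j = ρ₂)) := by
  obtain ⟨hpN, hpH, hpL, hpC⟩ := (hPath p).1 hp
  obtain ⟨hqN, hqH, hqL, hqC⟩ := (hPath q).1 hq
  have hss : ∀ r : List V, r.Nodup → r.head? = some ι → r.getLast? = some o →
      r.Chain' E → ρ₂ ∈ r := fun r hN hH hL hC =>
    (hSS ρ₂).1 h₂ r ((hPath r).2 ⟨hN, hH, hL, hC⟩)
  constructor
  · exact stmt16_key hpN hpH hpL hpC hqN hqL hqC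
      ((hSS ρ₁).1 h₁ q hq) ((hSS ρ₂).1 h₂ q hq) hss
  · exact stmt16_key hqN hqH hqL hqC hpN hpL hpC
      ((hSS ρ₁).1 h₁ p hp) ((hSS ρ₂).1 h₂ p hp) hss
end

section
/- Consider directed graphs on the vertex set {0, 1, 2} given by irreflexive relations E (no self-loops), with the vertex 0 playing the role of the input = output node ι, and satisfying the core condition: for every vertex v there is a directed walk from 0 to v and a directed walk from v to 0 (equivalently, every vertex lies on a closed directed walk through 0). Call two such graphs E and E' isomorphic if there is a permutation π of {0, 1, 2} with π(0) = 0 such that E'(π(u), π(v)) holds if and only if E(u, v) holds, for all u, v. Then there are exactly 10 isomorphism classes of such graphs. -/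
set_option maxRecDepth 100000


/-- A directed graph on `{0,1,2}` (irreflexive relation, no self-loops) which is a core
input = output network with distinguished node `0`: every vertex is reachable from `0`
by a directed walk and `0` is reachable from every vertex. -/
def IsCore3 (E : Fin 3 → Fin 3 → Prop) : Prop :=
  (∀ v, ¬ E v v) ∧
  ∀ v, Relation.ReflTransGen E 0 v ∧ Relation.ReflTransGen E v 0

/-- Isomorphism of directed graphs on `{0,1,2}` fixing the distinguished node `0`. -/
def Iso3 (E E' : Fin 3 → Fin 3 → Prop) : Prop :=
  ∃ π : Equiv.Perm (Fin 3), π 0 = 0 ∧ ∀ u v, (E' (π u) (π v) ↔ E u v)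

/-- Reachability in at most 3 steps. -/
def R3 (E : Fin 3 → Fin 3 → Prop) (a b : Fin 3) : Prop :=
  a = b ∨ E a b ∨ (∃ c, E a c ∧ E c b) ∨ (∃ c d, E a c ∧ E c d ∧ E d b)

instance (B : Fin 3 → Fin 3 → Bool) (a b : Fin 3) :
    Decidable (R3 (fun u v => B u v = true) a b) := by
  unfold R3; exact inferInstance

lemma R3_tail : ∀ B : Fin 3 → Fin 3 → Bool, ∀ a b c : Fin 3,
    R3 (fun u v => B u v = true) a b → B b c = true →
    R3 (fun u v => B u v = true) a c := by decide

lemma rtg_iff_R3 (B : Fin 3 → Fin 3 → Bool) (a b : Fin 3) :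
    Relation.ReflTransGen (fun u v => B u v = true) a b ↔
      R3 (fun u v => B u v = true) a b := by
  constructor
  · intro h
    induction h with
    | refl => exact Or.inl rfl
    | tail _ hbc ih => exact R3_tail B _ _ _ ih hbc
  · rintro (rfl | h | ⟨c, h1, h2⟩ | ⟨c, d, h1, h2, h3⟩)
    · exact Relation.ReflTransGen.refl
    · exact Relation.ReflTransGen.single h
    · exact Relation.ReflTransGen.head h1 (Relation.ReflTransGen.single h2)
    · exact Relation.ReflTransGen.head h1
        (Relation.ReflTransGen.head h2 (Relation.ReflTransGen.single h3))

/-- Boolean core condition. -/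
def Core3B (B : Fin 3 → Fin 3 → Bool) : Prop :=
  (∀ v, ¬ B v v = true) ∧
  ∀ v, R3 (fun u w => B u w = true) 0 v ∧ R3 (fun u w => B u w = true) v 0

/-- Boolean isomorphism. -/
def IsoB (B B' : Fin 3 → Fin 3 → Bool) : Prop :=
  ∃ π : Equiv.Perm (Fin 3), π 0 = 0 ∧ ∀ u v, B' (π u) (π v) = B u v

/-- The ten representative boolean adjacency matrices. -/
def M : Fin 10 → Fin 3 → Fin 3 → Bool :=
  ![![![false, false, true ], ![false, false, true ], ![true,  true,  false]],
    ![![false, false, true ], ![true,  false, false], ![false, true,  false]],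
    ![![false, false, true ], ![true,  false, false], ![true,  true,  false]],
    ![![false, false, true ], ![true,  false, true ], ![false, true,  false]],
    ![![false, false, true ], ![true,  false, true ], ![true,  true,  false]],
    ![![false, true,  true ], ![false, false, true ], ![true,  false, false]],
    ![![false, true,  true ], ![false, false, true ], ![true,  true,  false]],
    ![![false, true,  true ], ![true,  false, false], ![true,  false, false]],
    ![![false, true,  true ], ![true,  false, false], ![true,  true,  false]],
    ![![false, true,  true ], ![true,  false, true ], ![true,  true,  false]]]

instance (B : Fin 3 → Fin 3 → Bool) : Decidable (Core3B B) := by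
  unfold Core3B; exact inferInstance

instance (B B' : Fin 3 → Fin 3 → Bool) : Decidable (IsoB B B') := by
  unfold IsoB; exact inferInstance

lemma M_core : ∀ i, Core3B (M i) := by decide

lemma M_noniso : ∀ i j : Fin 10, i ≠ j → ¬ IsoB (M i) (M j) := by decide

lemma M_cover : ∀ B : Fin 3 → Fin 3 → Bool, Core3B B → ∃ i, IsoB B (M i) := by decide

lemma rtg_congr {α} {E F : α → α → Prop} (h : ∀ a b, E a b ↔ F a b) {a b : α}
    (hr : Relation.ReflTransGen E a b) : Relation.ReflTransGen F a b :=
  Relation.ReflTransGen.mono (fun x y hxy => (h x y).mp hxy) _ _ hr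

/-- There are exactly `10` isomorphism classes of `3`-node
input = output core networks: there exist `10` core networks, pairwise non-isomorphic,
such that every core network is isomorphic to one of them. -/
theorem stmt_17 :
    ∃ reps : Fin 10 → (Fin 3 → Fin 3 → Prop),
      (∀ i, IsCore3 (reps i)) ∧
      (∀ i j, i ≠ j → ¬ Iso3 (reps i) (reps j)) ∧
      (∀ E : Fin 3 → Fin 3 → Prop, IsCore3 E → ∃ i, Iso3 E (reps i)) := by
  classical
  refine ⟨fun i u v => M i u v = true, ?_, ?_, ?_⟩
  · intro i
    obtain ⟨h1, h2⟩ := M_core i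
    exact ⟨h1, fun v => ⟨(rtg_iff_R3 (M i) 0 v).mpr (h2 v).1,
      (rtg_iff_R3 (M i) v 0).mpr (h2 v).2⟩⟩
  · intro i j hij ⟨π, hπ0, hπ⟩
    exact M_noniso i j hij ⟨π, hπ0, fun u v => Bool.eq_iff_iff.mpr (hπ u v)⟩
  · intro E ⟨hirr, hcore⟩
    set B : Fin 3 → Fin 3 → Bool := fun u v => decide (E u v) with hB
    have hEB : ∀ u v, E u v ↔ B u v = true := fun u v => by simp [hB]
    have hCoreB : Core3B B := by
      refine ⟨fun v hv => hirr v ((hEB v v).mpr hv), fun v => ?_⟩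
      constructor
      · exact (rtg_iff_R3 B 0 v).mp (rtg_congr hEB (hcore v).1)
      · exact (rtg_iff_R3 B v 0).mp (rtg_congr hEB (hcore v).2)
    obtain ⟨i, π, hπ0, hπ⟩ := M_cover B hCoreB
    exact ⟨i, π, hπ0, fun u v =>
      show M i (π u) (π v) = true ↔ E u v by rw [hπ u v]; exact (hEB u v).symm⟩
end

section
/- Let F : ℝⁿ × ℝ → ℝⁿ be continuously differentiable, let X : ℝ × ℝ → ℝⁿ, (t, I) ↦ X(t, I), be continuously differentiable with ∂X/∂t(t, I) = F(X(t, I), I) for all t and all I near I₀, and let τ be a function differentiable at I₀ with τ(I) > 0 and X(t + τ(I), I) = X(t, I) for all t and all I near I₀ (a family of periodic solutions with period τ(I)). Write τ₀ = τ(I₀), X₀(t) = X(t, I₀), and A(t) = D_X F(X₀(t), I₀). Let w* : ℝ → ℝⁿ be differentiable with (w*)'(t) = −A(t)ᵀ w*(t) for all t, w*(t + τ₀) = w*(t) for all t, and the normalization ⟨∂X/∂t(t, I₀), w*(t)⟩ = 1 for all t. Then the derivative of the period satisfies τ'(I₀) = −∫₀^{τ₀} ⟨F_I(X₀(t), I₀),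 w*(t)⟩ dt, where F_I denotes the partial derivative of F with respect to the parameter I and ⟨·,·⟩ is the Euclidean inner product on ℝⁿ. -/
open MeasureTheory

/-- Formula for the derivative of the period input-output function:
for a `C¹` family of periodic solutions `X(t, I)` of `dX/dt = F(X, I)` with period
`τ(I)`, and `w*` the `τ₀`-periodic, suitably normalized solution of the adjoint Floquet
equation along `X₀ = X(·, I₀)`, one has
`τ'(I₀) = −∫₀^{τ₀} ⟨F_I(X₀(t), I₀), w*(t)⟩ dt`. -/
theorem stmt_18 (n : ℕ)
    (F : EuclideanSpace ℝ (Fin n) × ℝ → EuclideanSpace ℝ (Fin n))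
    (hF : ContDiff ℝ 1 F)
    (I₀ : ℝ) (U : Set ℝ) (hU : U ∈ nhds I₀)
    (X : ℝ → ℝ → EuclideanSpace ℝ (Fin n))
    (hX : ContDiff ℝ 1 (fun p : ℝ × ℝ => X p.1 p.2))
    (hODE : ∀ t : ℝ, ∀ I ∈ U, HasDerivAt (fun s => X s I) (F (X t I, I)) t)
    (τ : ℝ → ℝ) (hτdiff : DifferentiableAt ℝ τ I₀)
    (hτpos : ∀ I ∈ U, 0 < τ I)
    (hper : ∀ t : ℝ, ∀ I ∈ U, X (t + τ I) I = X t I)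
    (A : ℝ → EuclideanSpace ℝ (Fin n) →L[ℝ] EuclideanSpace ℝ (Fin n))
    (hA : ∀ t, A t = fderiv ℝ (fun x => F (x, I₀)) (X t I₀))
    (wstar : ℝ → EuclideanSpace ℝ (Fin n))
    (hw : ∀ t, HasDerivAt wstar (-(ContinuousLinearMap.adjoint (A t) (wstar t))) t)
    (hwper : ∀ t, wstar (t + τ I₀) = wstar t)
    (hnorm : ∀ t, (inner ℝ (deriv (fun s => X s I₀) t) (wstar t) : ℝ) = 1) :
    deriv τ I₀ =
      -∫ t in (0 : ℝ)..(τ I₀),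
        (inner ℝ (fderiv ℝ F (X t I₀, I₀) (0, 1)) (wstar t) : ℝ) := by
  have hI₀ : I₀ ∈ U := mem_of_mem_nhds hU
  obtain ⟨Φ, hΦdef⟩ : ∃ Φ : ℝ × ℝ → EuclideanSpace ℝ (Fin n),
      Φ = fun p : ℝ × ℝ => X p.1 p.2 := ⟨_, rfl⟩
  have hXΦ : ContDiff ℝ 1 Φ := hΦdef ▸ hX
  have hΦd : Differentiable ℝ Φ := hXΦ.differentiable one_ne_zero
  have hFd : Differentiable ℝ F := hF.differentiable one_ne_zero
  have hΦc : Continuous Φ := hXΦ.continuous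
  have hFc : Continuous F := hF.continuous
  have hdF : Continuous (fun p : EuclideanSpace ℝ (Fin n) × ℝ => fderiv ℝ F p) :=
    hF.continuous_fderiv one_ne_zero
  have hdΦ : Continuous (fun p : ℝ × ℝ => fderiv ℝ Φ p) := hXΦ.continuous_fderiv one_ne_zero
  obtain ⟨Y, hYdef⟩ : ∃ Y : ℝ → EuclideanSpace ℝ (Fin n),
      Y = fun t => fderiv ℝ Φ (t, I₀) ((0 : ℝ), (1 : ℝ)) := ⟨_, rfl⟩
  obtain ⟨B, hBdef⟩ : ∃ B : ℝ → EuclideanSpace ℝ (Fin n),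
      B = fun t => fderiv ℝ F (X t I₀, I₀) ((0 : EuclideanSpace ℝ (Fin n)), (1 : ℝ)) := ⟨_, rfl⟩
  obtain ⟨u, hu⟩ : ∃ u : ℝ → ℝ → EuclideanSpace ℝ (Fin n),
      u = fun I s => fderiv ℝ F (X s I, I) (fderiv ℝ Φ (s, I) (0, 1), 1) := ⟨_, rfl⟩
  -- basic derivative facts
  have hYI' : ∀ t I, HasDerivAt (fun J => X t J) (fderiv ℝ Φ (t, I) (0, 1)) I := by
    intro t I
    have h1 : HasDerivAt (fun J : ℝ => ((t, J) : ℝ × ℝ)) ((0 : ℝ), (1 : ℝ)) I :=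
      (hasDerivAt_const I t).prodMk (hasDerivAt_id I)
    have := (hΦd (t, I)).hasFDerivAt.comp_hasDerivAt I h1
    simpa [Function.comp_def, hΦdef] using this
  have hXt : ∀ t I, HasDerivAt (fun s => X s I) (fderiv ℝ Φ (t, I) (1, 0)) t := by
    intro t I
    have h1 : HasDerivAt (fun s : ℝ => ((s, I) : ℝ × ℝ)) ((1 : ℝ), (0 : ℝ)) t :=
      (hasDerivAt_id t).prodMk (hasDerivAt_const t I)
    have := (hΦd (t, I)).hasFDerivAt.comp_hasDerivAt t h1
    simpa [Function.comp_def, hΦdef] using this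
  have hG : ∀ s I, HasDerivAt (fun J => F (X s J, J)) (u I s) I := by
    intro s I
    rw [hu]
    exact HasFDerivAt.comp_hasDerivAt
      (f := fun J : ℝ => ((X s J, J) : EuclideanSpace ℝ (Fin n) × ℝ)) I
      (hFd (X s I, I)).hasFDerivAt ((hYI' s I).prodMk (hasDerivAt_id I))
  -- continuity facts
  have hXc : ∀ I, Continuous (fun s => X s I) := fun I => by
    have := hΦc.comp (continuous_id.prodMk (continuous_const (y := I)))
    simpa [Function.comp_def, hΦdef] using this
  have hcont : ∀ I, Continuous (fun s => F (X s I, I)) := fun I =>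
    hFc.comp ((hXc I).prodMk continuous_const)
  have hcontu : Continuous (fun q : ℝ × ℝ => u q.2 q.1) := by
    rw [hu]
    have hc2 : Continuous (fun q : ℝ × ℝ => fderiv ℝ Φ q ((0 : ℝ), (1 : ℝ))) :=
      isBoundedBilinearMap_apply.continuous.comp (hdΦ.prodMk continuous_const)
    have hc1 : Continuous (fun q : ℝ × ℝ => fderiv ℝ F (X q.1 q.2, q.2)) := by
      refine hdF.comp (Continuous.prodMk ?_ continuous_snd)
      simpa [hΦdef] using hΦc
    exact isBoundedBilinearMap_apply.continuous.comp
      (hc1.prodMk (hc2.prodMk continuous_const))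
  have hucont : Continuous (u I₀) :=
    hcontu.comp (continuous_id.prodMk continuous_const)
  have hYcont : Continuous Y := by
    rw [hYdef]
    exact (isBoundedBilinearMap_apply.continuous.comp
      (hdΦ.prodMk continuous_const)).comp (continuous_id.prodMk continuous_const)
  have hwd : Differentiable ℝ wstar := fun t => (hw t).differentiableAt
  have hwc : Continuous wstar := hwd.continuous
  have hBcont : Continuous B := by
    rw [hBdef]
    exact isBoundedBilinearMap_apply.continuous.comp
      ((hdF.comp ((hXc I₀).prodMk continuous_const)).prodMk continuous_const)
  -- FTC in t, for I ∈ U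
  have hFTC : ∀ t : ℝ, ∀ I ∈ U, X t I = X 0 I + ∫ s in (0:ℝ)..t, F (X s I, I) := by
    intro t I hI
    have h := intervalIntegral.integral_eq_sub_of_hasDerivAt
      (f := fun s => X s I) (f' := fun s => F (X s I, I))
      (fun s _ => hODE s I hI) ((hcont I).intervalIntegrable 0 t)
    rw [h]; abel
  -- differentiation under the integral sign
  have hDer : ∀ t : ℝ, HasDerivAt (fun I => ∫ s in (0:ℝ)..t, F (X s I, I))
      (∫ s in (0:ℝ)..t, u I₀ s) I₀ := by
    intro t
    obtain ⟨C, hC⟩ := ((isCompact_uIcc (a := (0:ℝ)) (b := t)).prod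
      (isCompact_closedBall I₀ 1)).exists_bound_of_continuousOn hcontu.continuousOn
    have key := intervalIntegral.hasDerivAt_integral_of_dominated_loc_of_deriv_le
      (F := fun I s => F (X s I, I)) (F' := u) (x₀ := I₀) (a := 0) (b := t)
      (μ := volume) (bound := fun _ => C) (Metric.ball_mem_nhds I₀ one_pos)
      (Filter.Eventually.of_forall fun I => ((hcont I).aestronglyMeasurable).restrict)
      ((hcont I₀).intervalIntegrable 0 t)
      ((hucont.aestronglyMeasurable).restrict)
      ?_ intervalIntegrable_const ?_
    · exact key.2
    · exact Filter.Eventually.of_forall fun s hs I hI =>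
        hC (s, I) ⟨Set.uIoc_subset_uIcc hs, Metric.ball_subset_closedBall hI⟩
    · exact Filter.Eventually.of_forall fun s _ I _ => hG s I
  -- integral equation for Y
  have hYat : ∀ t, HasDerivAt (fun J => X t J) (Y t) I₀ := by
    intro t; simp only [hYdef]; exact hYI' t I₀
  have hYeq : ∀ t : ℝ, Y t = Y 0 + ∫ s in (0:ℝ)..t, u I₀ s := by
    intro t
    have h0 : HasDerivAt (fun I => X 0 I) (Y 0) I₀ := hYat 0
    have h1 : HasDerivAt (fun I => X 0 I + ∫ s in (0:ℝ)..t, F (X s I, I))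
        (Y 0 + ∫ s in (0:ℝ)..t, u I₀ s) I₀ := h0.add (hDer t)
    have h2 : (fun I => X t I) =ᶠ[nhds I₀]
        (fun I => X 0 I + ∫ s in (0:ℝ)..t, F (X s I, I)) := by
      filter_upwards [hU] with I hI using hFTC t I hI
    have h3 : HasDerivAt (fun I => X t I) (Y 0 + ∫ s in (0:ℝ)..t, u I₀ s) I₀ :=
      h1.congr_of_eventuallyEq h2
    exact (h3.unique (hYat t)).symm
  -- Y is differentiable with the variational derivative
  have hYd : ∀ t, HasDerivAt Y (u I₀ t) t := by
    intro t
    have h1 : HasDerivAt (fun r => Y 0 + ∫ s in (0:ℝ)..r, u I₀ s) (u I₀ t) t :=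
      ((hucont.integral_hasStrictDerivAt 0 t).hasDerivAt).const_add (Y 0)
    have h2 : Y = fun r => Y 0 + ∫ s in (0:ℝ)..r, u I₀ s := funext hYeq
    rw [h2]; exact h1
  -- decomposition u I₀ t = A t (Y t) + B t
  have hAy : ∀ t (y : EuclideanSpace ℝ (Fin n)),
      A t y = fderiv ℝ F (X t I₀, I₀) (y, 0) := by
    intro t y
    have h1 : HasFDerivAt (fun x : EuclideanSpace ℝ (Fin n) => F (x, I₀))
        ((fderiv ℝ F (X t I₀, I₀)).comp
          ((ContinuousLinearMap.id ℝ (EuclideanSpace ℝ (Fin n))).prod 0)) (X t I₀) :=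
      HasFDerivAt.comp (f := fun x : EuclideanSpace ℝ (Fin n) =>
          ((x, I₀) : EuclideanSpace ℝ (Fin n) × ℝ)) (X t I₀)
        (hFd (X t I₀, I₀)).hasFDerivAt
        ((hasFDerivAt_id _).prodMk (hasFDerivAt_const I₀ _))
    rw [hA t, h1.fderiv]
    rfl
  have husplit : ∀ t, u I₀ t = A t (Y t) + B t := by
    intro t
    simp only [hu, hYdef, hBdef]
    have hsum : ((fderiv ℝ Φ (t, I₀) (0, 1), (1:ℝ)) :
        EuclideanSpace ℝ (Fin n) × ℝ) = (fderiv ℝ Φ (t, I₀) (0, 1), 0) + (0, 1) := by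
      simp
    rw [hsum, map_add, hAy]
  -- derivative of g t = ⟪Y t, w t⟫
  have hg : ∀ t, HasDerivAt (fun r => (inner ℝ (Y r) (wstar r) : ℝ))
      ((inner ℝ (B t) (wstar t) : ℝ)) t := by
    intro t
    have h1 := (hYd t).inner ℝ (hw t)
    refine h1.congr_deriv ?_
    rw [husplit t, inner_neg_right, ContinuousLinearMap.adjoint_inner_right,
      inner_add_left]
    ring
  -- integrate
  have hint : (∫ t in (0:ℝ)..(τ I₀), (inner ℝ (B t) (wstar t) : ℝ))
      = (inner ℝ (Y (τ I₀)) (wstar (τ I₀)) : ℝ) - (inner ℝ (Y 0) (wstar 0) : ℝ) :=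
    intervalIntegral.integral_eq_sub_of_hasDerivAt (fun t _ => hg t)
      ((hBcont.inner hwc).intervalIntegrable 0 (τ I₀))
  -- periodicity consequence for Y
  have hX0 : X (τ I₀) I₀ = X 0 I₀ := by
    have := hper 0 I₀ hI₀; rwa [zero_add] at this
  have hXteq : fderiv ℝ Φ (τ I₀, I₀) (1, 0) = F (X 0 I₀, I₀) := by
    have := (hXt (τ I₀) I₀).unique (hODE (τ I₀) I₀ hI₀)
    rw [this, hX0]
  have hYτ : Y 0 = deriv τ I₀ • F (X 0 I₀, I₀) + Y (τ I₀) := by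
    have h1 : HasDerivAt (fun I => Φ (τ I, I))
        (fderiv ℝ Φ (τ I₀, I₀) (deriv τ I₀, 1)) I₀ :=
      HasFDerivAt.comp_hasDerivAt (f := fun I : ℝ => ((τ I, I) : ℝ × ℝ)) I₀
        (hΦd (τ I₀, I₀)).hasFDerivAt ((hτdiff.hasDerivAt).prodMk (hasDerivAt_id I₀))
    have h2 : HasDerivAt (fun I => X 0 I)
        (fderiv ℝ Φ (τ I₀, I₀) (deriv τ I₀, 1)) I₀ := by
      refine h1.congr_of_eventuallyEq ?_
      filter_upwards [hU] with I hI
      have := hper 0 I hI; rw [zero_add] at this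
      rw [hΦdef]; exact this.symm
    have h3 : fderiv ℝ Φ (τ I₀, I₀) (deriv τ I₀, 1) = Y 0 := h2.unique (hYat 0)
    have hsum : ((deriv τ I₀, (1:ℝ)) : ℝ × ℝ) = deriv τ I₀ • ((1:ℝ), (0:ℝ)) + (0, 1) := by
      simp
    have hYatτ : Y (τ I₀) = fderiv ℝ Φ (τ I₀, I₀) ((0:ℝ), (1:ℝ)) := by simp only [hYdef]
    calc Y 0 = fderiv ℝ Φ (τ I₀, I₀) (deriv τ I₀, 1) := h3.symm
      _ = deriv τ I₀ • fderiv ℝ Φ (τ I₀, I₀) ((1:ℝ), (0:ℝ))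
            + fderiv ℝ Φ (τ I₀, I₀) ((0:ℝ), (1:ℝ)) := by
          rw [hsum, map_add, ContinuousLinearMap.map_smul]
      _ = deriv τ I₀ • F (X 0 I₀, I₀) + Y (τ I₀) := by rw [hXteq, hYatτ]
  -- normalization at 0
  have hn0 : (inner ℝ (F (X 0 I₀, I₀)) (wstar 0) : ℝ) = 1 := by
    have := hnorm 0
    rwa [(hODE 0 I₀ hI₀).deriv] at this
  have hwτ : wstar (τ I₀) = wstar 0 := by
    have := hwper 0; rwa [zero_add] at this
  -- final computation
  have hfinal : (∫ t in (0:ℝ)..(τ I₀), (inner ℝ (B t) (wstar t) : ℝ)) = -deriv τ I₀ := by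
    rw [hint, hwτ]
    have hYτ' : Y (τ I₀) = Y 0 - deriv τ I₀ • F (X 0 I₀, I₀) := by
      rw [hYτ]; abel
    rw [hYτ', inner_sub_left, inner_smul_left]
    simp [hn0]
  have hBgoal : (∫ t in (0:ℝ)..(τ I₀),
      (inner ℝ (fderiv ℝ F (X t I₀, I₀) (0, 1)) (wstar t) : ℝ))
      = ∫ t in (0:ℝ)..(τ I₀), (inner ℝ (B t) (wstar t) : ℝ) := by
    rw [hBdef]
  rw [hBgoal, hfinal]
  ring
end

section
/- Let g₁, g₂, g₃, g₄, g₅, f : ℝ → ℝ be continuously differentiable and consider the product inhibition system ẋ = I − g₄(x) − f(z)g₁(x), ẏ = f(z)g₁(x) − g₂(y) − g₅(y), ż = g₂(y) − g₃(z). Assume f(z) > 0 for all z, g₁'(x) < 0 for all x, and g₂'(y) < 0 for all y. Then for any continuously differentiable family of equilibria (x(I), y(I), z(I)) on an open interval whose 3×3 Jacobian is invertible at every I, one has z'(I) ≠ 0 for every I; that is, the product inhibition model cannot exhibit infinitesimal homeostasis. -/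
/-- (Product inhibition cannot exhibit infinitesimal homeostasis.)
For the system `ẋ = I − g₄(x) − f(z)g₁(x)`, `ẏ = f(z)g₁(x) − g₂(y) − g₅(y)`,
`ż = g₂(y) − g₃(z)` with `f > 0`, `g₁' < 0`, `g₂' < 0`, along any `C¹` family of
equilibria on an open interval whose Jacobian is invertible at every `I`, the output
derivative `z'(I)` never vanishes. -/
theorem stmt_19 (g₁ g₂ g₃ g₄ g₅ f : ℝ → ℝ)
    (hg₁ : ContDiff ℝ 1 g₁) (hg₂ : ContDiff ℝ 1 g₂) (hg₃ : ContDiff ℝ 1 g₃)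
    (hg₄ : ContDiff ℝ 1 g₄) (hg₅ : ContDiff ℝ 1 g₅) (hf : ContDiff ℝ 1 f)
    (hfpos : ∀ u : ℝ, 0 < f u)
    (hg₁' : ∀ u : ℝ, deriv g₁ u < 0)
    (hg₂' : ∀ u : ℝ, deriv g₂ u < 0)
    (Ω : Set ℝ) (hΩ : IsOpen Ω) (hΩ' : Ω.OrdConnected)
    (x y z : ℝ → ℝ)
    (hx : ContDiffOn ℝ 1 x Ω) (hy : ContDiffOn ℝ 1 y Ω) (hz : ContDiffOn ℝ 1 z Ω)
    (heq1 : ∀ I ∈ Ω, I - g₄ (x I) - f (z I) * g₁ (x I) = 0)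
    (heq2 : ∀ I ∈ Ω, f (z I) * g₁ (x I) - g₂ (y I) - g₅ (y I) = 0)
    (heq3 : ∀ I ∈ Ω, g₂ (y I) - g₃ (z I) = 0)
    (hJ : ∀ I ∈ Ω,
      (!![-(deriv g₄ (x I)) - f (z I) * deriv g₁ (x I), 0, -(deriv f (z I)) * g₁ (x I);
          f (z I) * deriv g₁ (x I), -(deriv g₂ (y I)) - deriv g₅ (y I),
            deriv f (z I) * g₁ (x I);
          0, deriv g₂ (y I), -(deriv g₃ (z I))]).det ≠ 0) :
    ∀ I ∈ Ω, deriv z I ≠ 0 := by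
  intro I hI hz0
  have hmem : Ω ∈ nhds I := hΩ.mem_nhds hI
  have hxI : HasDerivAt x (deriv x I) I :=
    (((hx.contDiffAt hmem).differentiableAt one_ne_zero).hasDerivAt)
  have hyI : HasDerivAt y (deriv y I) I :=
    (((hy.contDiffAt hmem).differentiableAt one_ne_zero).hasDerivAt)
  have hzI : HasDerivAt z (deriv z I) I :=
    (((hz.contDiffAt hmem).differentiableAt one_ne_zero).hasDerivAt)
  have hg1x : HasDerivAt (fun t => g₁ (x t)) (deriv g₁ (x I) * deriv x I) I :=
    ((hg₁.differentiable one_ne_zero (x I)).hasDerivAt).comp I hxI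
  have hg2y : HasDerivAt (fun t => g₂ (y t)) (deriv g₂ (y I) * deriv y I) I :=
    ((hg₂.differentiable one_ne_zero (y I)).hasDerivAt).comp I hyI
  have hg3z : HasDerivAt (fun t => g₃ (z t)) (deriv g₃ (z I) * deriv z I) I :=
    ((hg₃.differentiable one_ne_zero (z I)).hasDerivAt).comp I hzI
  have hg4x : HasDerivAt (fun t => g₄ (x t)) (deriv g₄ (x I) * deriv x I) I :=
    ((hg₄.differentiable one_ne_zero (x I)).hasDerivAt).comp I hxI
  have hg5y : HasDerivAt (fun t => g₅ (y t)) (deriv g₅ (y I) * deriv y I) I :=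
    ((hg₅.differentiable one_ne_zero (y I)).hasDerivAt).comp I hyI
  have hfz : HasDerivAt (fun t => f (z t)) (deriv f (z I) * deriv z I) I :=
    ((hf.differentiable one_ne_zero (z I)).hasDerivAt).comp I hzI
  -- derivative of each equilibrium equation is 0
  have H1 : HasDerivAt (fun t => t - g₄ (x t) - f (z t) * g₁ (x t))
      (1 - deriv g₄ (x I) * deriv x I -
        ((deriv f (z I) * deriv z I) * g₁ (x I) +
          f (z I) * (deriv g₁ (x I) * deriv x I))) I :=
    ((hasDerivAt_id I).sub hg4x).sub (hfz.mul hg1x)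
  have H2 : HasDerivAt (fun t => f (z t) * g₁ (x t) - g₂ (y t) - g₅ (y t))
      ((deriv f (z I) * deriv z I) * g₁ (x I) +
          f (z I) * (deriv g₁ (x I) * deriv x I) -
        deriv g₂ (y I) * deriv y I - deriv g₅ (y I) * deriv y I) I :=
    ((hfz.mul hg1x).sub hg2y).sub hg5y
  have H3 : HasDerivAt (fun t => g₂ (y t) - g₃ (z t))
      (deriv g₂ (y I) * deriv y I - deriv g₃ (z I) * deriv z I) I :=
    hg2y.sub hg3z
  have hzero1 : HasDerivAt (fun t => t - g₄ (x t) - f (z t) * g₁ (x t)) 0 I :=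
    (hasDerivAt_const I (0:ℝ)).congr_of_eventuallyEq
      (Filter.eventually_of_mem hmem (fun t ht => heq1 t ht))
  have hzero2 : HasDerivAt (fun t => f (z t) * g₁ (x t) - g₂ (y t) - g₅ (y t)) 0 I :=
    (hasDerivAt_const I (0:ℝ)).congr_of_eventuallyEq
      (Filter.eventually_of_mem hmem (fun t ht => heq2 t ht))
  have hzero3 : HasDerivAt (fun t => g₂ (y t) - g₃ (z t)) 0 I :=
    (hasDerivAt_const I (0:ℝ)).congr_of_eventuallyEq
      (Filter.eventually_of_mem hmem (fun t ht => heq3 t ht))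
  have e1 := H1.unique hzero1
  have e2 := H2.unique hzero2
  have e3 := H3.unique hzero3
  rw [hz0] at e1 e2 e3
  have hy0 : deriv y I = 0 := by
    have := (hg₂' (y I)).ne
    simp only [mul_zero, sub_zero] at e3
    exact (mul_eq_zero.mp e3).resolve_left this
  rw [hy0] at e2
  have hx0 : deriv x I = 0 := by
    have h1 := (hg₁' (x I)).ne
    have h2 := (hfpos (z I)).ne'
    simp only [mul_zero, zero_mul, zero_add, sub_zero] at e2
    rcases mul_eq_zero.mp e2 with h | h
    · exact absurd h h2
    · exact (mul_eq_zero.mp h).resolve_left h1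
  rw [hx0] at e1
  simp at e1
end
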